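/- arXiv:2408.06191 — 4 statements merged into one kernel-verified Lean document; each statement's English description precedes it below -/
import Mathlib

section
/- For all a, b, c ≥ 1 and invariant functions f ∈ C_a, g ∈ C_b, h ∈ C_c, Harish-Chandra induction is associative: R^{a+b+c}_{a+b,c}((R^{a+b}_{a,b}(f ⊠ g)) ⊠ h) = R^{a+b+c}_{a,b+c}(f ⊠ (R^{b+c}_{b,c}(g ⊠ h))), where f ⊠ g denotes the function (x,y) ↦ f(x)·g(y). -/
open Matrix BigOperators

namespace HCPaper

open scoped Classical

/-- `gl F n` : the additive group of `n × n` matrices over `F`. -/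
abbrev gl (F : Type) (n : ℕ) := Matrix (Fin n) (Fin n) F

variable {F : Type} [Field F] [Fintype F] [DecidableEq F]

/-- Conjugation (adjoint) action of `GL_n(F)` on `gl_n(F)`. -/
def conjM {n : ℕ} (g : Matrix.GeneralLinearGroup (Fin n) F) (x : gl F n) : gl F n :=
  (g : Matrix (Fin n) (Fin n) F) * x * ((g⁻¹ : Matrix.GeneralLinearGroup (Fin n) F) : Matrix (Fin n) (Fin n) F)

/-- A function `f : gl_n(F) → ℂ` is invariant if it is constant on `GL_n(F)`-conjugacy orbits. -/
def Invariant (n : ℕ) (f : gl F n → ℂ) : Prop :=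
  ∀ (g : Matrix.GeneralLinearGroup (Fin n) F) (x : gl F n), f (conjM g x) = f x

/-- Invariance for functions on `gl_k(F) × gl_l(F)` under `GL_k(F) × GL_l(F)`. -/
def Invariant₂ (k l : ℕ) (h : gl F k × gl F l → ℂ) : Prop :=
  ∀ (g₁ : Matrix.GeneralLinearGroup (Fin k) F) (g₂ : Matrix.GeneralLinearGroup (Fin l) F)
    (x : gl F k) (y : gl F l), h (conjM g₁ x, conjM g₂ y) = h (x, y)

/-- Transport of matrices along an equality of sizes. -/
def castM {m n : ℕ} (h : m = n) (x : gl F m) : gl F n :=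
  Matrix.reindex (finCongr h) (finCongr h) x

/-- Transport of functions along an equality of sizes. -/
def castFun {m n : ℕ} (h : m = n) (f : gl F m → ℂ) : gl F n → ℂ :=
  fun x => f (castM h.symm x)

/-- The block upper-triangular matrix `[x u; 0 y]`, viewed in `gl_{k+l}(F)`. -/
def but (k l : ℕ) (x : gl F k) (u : Matrix (Fin k) (Fin l) F) (y : gl F l) : gl F (k + l) :=
  Matrix.reindex finSumFinEquiv finSumFinEquiv (Matrix.fromBlocks x u 0 y)

/-- The block lower-triangular matrix `[x 0; v y]`, viewed in `gl_{k+l}(F)`. -/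
def blt (k l : ℕ) (x : gl F k) (v : Matrix (Fin l) (Fin k) F) (y : gl F l) : gl F (k + l) :=
  Matrix.reindex finSumFinEquiv finSumFinEquiv (Matrix.fromBlocks x 0 v y)

/-- View a matrix in `gl_{k+l}(F)` as a `2 × 2`-block matrix. -/
def blk (k l : ℕ) (m : gl F (k + l)) : Matrix (Fin k ⊕ Fin l) (Fin k ⊕ Fin l) F :=
  Matrix.reindex finSumFinEquiv.symm finSumFinEquiv.symm m

/-- Membership in `P_{k,l}` : being block upper triangular with blocks of sizes `k, l`. -/
def IsBUT (k l : ℕ) (m : gl F (k + l)) : Prop := Matrix.toBlocks₂₁ (blk k l m) = 0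

/-- The projection `π : P_{k,l} → gl_k(F) × gl_l(F)` deleting the off-diagonal block. -/
def proj (k l : ℕ) (m : gl F (k + l)) : gl F k × gl F l :=
  (Matrix.toBlocks₁₁ (blk k l m), Matrix.toBlocks₂₂ (blk k l m))

/-- The order of the group `P^×_{k,l}` of invertible block upper-triangular matrices. -/
noncomputable def Pcard (F : Type) [Field F] [Fintype F] [DecidableEq F] (k l : ℕ) : ℕ :=
  Nat.card {g : Matrix.GeneralLinearGroup (Fin (k + l)) F //
    IsBUT k l (g : Matrix (Fin (k + l)) (Fin (k + l)) F)}

/-- Harish-Chandra restriction `*R^{k+l}_{k,l}`; by convention it is the identity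
(under the canonical identifications) when `k = 0` or `l = 0`. -/
noncomputable def HCres (k l : ℕ) (f : gl F (k + l) → ℂ) : gl F k × gl F l → ℂ :=
  if hk : k = 0 then fun p => f (castM (by omega) p.2)
  else if hl : l = 0 then fun p => f (castM (by omega) p.1)
  else fun p =>
    ((Fintype.card F : ℂ) ^ (k * l))⁻¹ * ∑ u : Matrix (Fin k) (Fin l) F, f (but k l p.1 u p.2)

/-- Harish-Chandra induction `R^{k+l}_{k,l}`; by convention it is the identity
(under the canonical identifications) when `k = 0` or `l = 0`. -/
noncomputable def HCind (k l : ℕ) (h : gl F k × gl F l → ℂ) : gl F (k + l) → ℂ :=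
  if hk : k = 0 then fun z => h (0, castM (by omega) z)
  else if hl : l = 0 then fun z => h (castM (by omega) z, 0)
  else fun z =>
    ((Pcard F k l : ℂ))⁻¹ *
      ∑ g : Matrix.GeneralLinearGroup (Fin (k + l)) F,
        if IsBUT k l (conjM g z) then h (proj k l (conjM g z)) else 0

/-- The hermitian inner product on `C_n`. -/
noncomputable def inn (n : ℕ) (f g : gl F n → ℂ) : ℂ :=
  ((Fintype.card (Matrix.GeneralLinearGroup (Fin n) F) : ℂ))⁻¹ *
    ∑ x : gl F n, f x * (starRingEnd ℂ) (g x)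

/-- The hermitian inner product on invariant functions on `gl_k(F) × gl_l(F)`. -/
noncomputable def inn₂ (k l : ℕ) (f g : gl F k × gl F l → ℂ) : ℂ :=
  ((Fintype.card (Matrix.GeneralLinearGroup (Fin k) F) *
      Fintype.card (Matrix.GeneralLinearGroup (Fin l) F) : ℂ))⁻¹ *
    ∑ p : gl F k × gl F l, f p * (starRingEnd ℂ) (g p)

/-- `f ∈ C_n` is pre-cuspidal if all proper Harish-Chandra restrictions of `f` vanish. -/
def PreCuspidal (n : ℕ) (f : gl F n → ℂ) : Prop :=
  ∀ (k l : ℕ), 1 ≤ k → 1 ≤ l → ∀ hkl : k + l = n, HCres k l (castFun hkl.symm f) = 0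

/-- The composite `R_{(n_1,…,n_r)} ∘ *R_{(n_1,…,n_r)}` of the iterated two-block
Harish-Chandra induction and restriction along the composition `(n_1,…,n_r)`. -/
noncomputable def RcompRes : (L : List ℕ) → (gl F L.sum → ℂ) → gl F L.sum → ℂ
  | [], f => f
  | (k :: L), f =>
      castFun (List.sum_cons).symm
        (HCind k L.sum fun p =>
          RcompRes L (fun y => HCres k L.sum (castFun List.sum_cons f) (p.1, y)) p.2)

/-- The duality operation `𝒟_n(f) = Σ_{(n_1,…,n_r) ⊨ n} (-1)^{n-r}
R_{(n_1,…,n_r)}(*R_{(n_1,…,n_r)} f)`, the sum over all compositions of `n`. -/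
noncomputable def Dual (n : ℕ) (f : gl F n → ℂ) : gl F n → ℂ :=
  ∑ c : Composition n,
    ((-1 : ℂ)) ^ (n - c.length) •
      castFun c.blocks_sum (RcompRes c.blocks (castFun c.blocks_sum.symm f))

/-- `C_n`, the subspace of invariant functions, as a `ℂ`-submodule of all functions. -/
noncomputable def InvSub (F : Type) [Field F] (n : ℕ) : Submodule ℂ (gl F n → ℂ) where
  carrier := {f | Invariant n f}
  add_mem' := by
    intro a b ha hb g x
    simp only [Pi.add_apply]
    rw [ha g x, hb g x]
  zero_mem' := by intro g x; rfl
  smul_mem' := by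
    intro c f hf g x
    simp only [Pi.smul_apply]
    rw [hf g x]

/-- `χ` is the character of a finite-dimensional complex representation of the
additive group `gl_n(F)`. -/
def IsChar (n : ℕ) (χ : gl F n → ℂ) : Prop :=
  ∃ V : FDRep ℂ (Multiplicative (gl F n)),
    ∀ x : gl F n, FDRep.character V (Multiplicative.ofAdd x) = χ x

/-- An invariant character of `gl_n(F)`. -/
def IsInvChar (n : ℕ) (χ : gl F n → ℂ) : Prop := IsChar n χ ∧ Invariant n χ

/-- A character of the additive group `gl_k(F) × gl_l(F)`. -/
def IsChar₂ (k l : ℕ) (χ : gl F k × gl F l → ℂ) : Prop :=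
  ∃ V : FDRep ℂ (Multiplicative (gl F k × gl F l)),
    ∀ p : gl F k × gl F l, FDRep.character V (Multiplicative.ofAdd p) = χ p

/-- An invariant character of `gl_k(F) × gl_l(F)`. -/
def IsInvChar₂ (k l : ℕ) (χ : gl F k × gl F l → ℂ) : Prop := IsChar₂ k l χ ∧ Invariant₂ k l χ

/-- An irreducible invariant character: a nonzero invariant character which is not
the sum of two nonzero invariant characters. -/
def IrrInvChar (n : ℕ) (χ : gl F n → ℂ) : Prop :=
  IsInvChar n χ ∧ χ ≠ 0 ∧
    ¬ ∃ χ₁ χ₂ : gl F n → ℂ, IsInvChar n χ₁ ∧ IsInvChar n χ₂ ∧ χ₁ ≠ 0 ∧ χ₂ ≠ 0 ∧ χ = χ₁ + χ₂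


section Aux
set_option linter.unusedSectionVars false
variable {F : Type} [Field F] [Fintype F] [DecidableEq F]

lemma conjM_mul {n : ℕ} (u v : Matrix.GeneralLinearGroup (Fin n) F) (z : gl F n) :
    conjM (u * v) z = conjM u (conjM v z) := by
  simp [conjM, _root_.mul_inv_rev, Units.val_mul, Matrix.mul_assoc]

lemma conjM_one {n : ℕ} (z : gl F n) : conjM (1 : Matrix.GeneralLinearGroup (Fin n) F) z = z := by
  simp [conjM]

lemma but_mul {k l : ℕ} (x x' : gl F k) (u u' : Matrix (Fin k) (Fin l) F) (y y' : gl F l) :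
    but k l x u y * but k l x' u' y' = but k l (x * x') (x * u' + u * y') (y * y') := by
  simp only [but, Matrix.reindex_apply, Matrix.submatrix_mul_equiv, Matrix.fromBlocks_multiply]
  simp

lemma but_one {k l : ℕ} : but k l (1 : gl F k) 0 (1 : gl F l) = (1 : gl F (k + l)) := by
  simp only [but, Matrix.fromBlocks_one, Matrix.reindex_apply, Matrix.submatrix_one_equiv]

lemma blk_but {k l : ℕ} (x : gl F k) (u : Matrix (Fin k) (Fin l) F) (y : gl F l) :
    blk k l (but k l x u y) = Matrix.fromBlocks x u 0 y := by
  simp [blk, but, Matrix.reindex_apply, Matrix.submatrix_submatrix]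

lemma reindex_blk {k l : ℕ} (m : gl F (k + l)) :
    Matrix.reindex finSumFinEquiv finSumFinEquiv (blk k l m) = m := by
  simp [blk, Matrix.reindex_apply, Matrix.submatrix_submatrix]

lemma but_blk {k l : ℕ} (m : gl F (k + l)) (hm : IsBUT k l m) :
    but k l (proj k l m).1 (Matrix.toBlocks₁₂ (blk k l m)) (proj k l m).2 = m := by
  unfold IsBUT at hm
  rw [but, proj, ← hm, Matrix.fromBlocks_toBlocks]
  exact reindex_blk m

end Aux
section Aux2
set_option linter.unusedSectionVars false
variable {F : Type} [Field F] [Fintype F] [DecidableEq F]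

lemma proj_fst_apply {k l : ℕ} (m : gl F (k + l)) (i j : Fin k) :
    (proj k l m).1 i j = m ⟨(i : ℕ), by omega⟩ ⟨(j : ℕ), by omega⟩ := by
  show blk k l m (Sum.inl i) (Sum.inl j) = _
  simp only [blk, Matrix.reindex_apply, Matrix.submatrix_apply, Equiv.symm_symm,
    finSumFinEquiv_apply_left]
  congr 1 <;> exact Fin.ext (by simp)

lemma proj_snd_apply {k l : ℕ} (m : gl F (k + l)) (i j : Fin l) :
    (proj k l m).2 i j = m ⟨k + (i : ℕ), by omega⟩ ⟨k + (j : ℕ), by omega⟩ := by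
  show blk k l m (Sum.inr i) (Sum.inr j) = _
  simp only [blk, Matrix.reindex_apply, Matrix.submatrix_apply, Equiv.symm_symm,
    finSumFinEquiv_apply_right]
  congr 1 <;> exact Fin.ext (by simp)

lemma isBUT_iff {k l : ℕ} (m : gl F (k + l)) :
    IsBUT k l m ↔ ∀ i j : Fin (k + l), (j : ℕ) < k → k ≤ (i : ℕ) → m i j = 0 := by
  constructor
  · intro H i j hj hi
    have h2 : Matrix.toBlocks₂₁ (blk k l m) ⟨(i : ℕ) - k, by omega⟩ ⟨(j : ℕ), hj⟩ = 0 := by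
      rw [H]; rfl
    have h3 : Matrix.toBlocks₂₁ (blk k l m) ⟨(i : ℕ) - k, by omega⟩ ⟨(j : ℕ), hj⟩
        = m ⟨k + ((i : ℕ) - k), by omega⟩ ⟨(j : ℕ), by omega⟩ := by
      show blk k l m (Sum.inr _) (Sum.inl _) = _
      simp only [blk, Matrix.reindex_apply, Matrix.submatrix_apply, Equiv.symm_symm,
        finSumFinEquiv_apply_right, finSumFinEquiv_apply_left]
      congr 1 <;> exact Fin.ext (by simp)
    rw [h3] at h2
    convert h2 using 2 <;> exact Fin.ext (by simp; omega)
  · intro H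
    unfold IsBUT
    ext i j
    show blk k l m (Sum.inr i) (Sum.inl j) = 0
    simp only [blk, Matrix.reindex_apply, Matrix.submatrix_apply, Equiv.symm_symm,
      finSumFinEquiv_apply_right, finSumFinEquiv_apply_left]
    exact H _ _ (by simp) (by simp)

lemma castM_apply {m n : ℕ} (h : m = n) (x : gl F m) (i j : Fin n) :
    castM h x i j = x ⟨(i : ℕ), by omega⟩ ⟨(j : ℕ), by omega⟩ := by
  simp only [castM, Matrix.reindex_apply, Matrix.submatrix_apply]
  congr 1 <;> exact Fin.ext (by simp)

end Aux2
section Aux3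
set_option linter.unusedSectionVars false
set_option maxHeartbeats 1000000
variable {F : Type} [Field F] [Fintype F] [DecidableEq F]

/-- The invertible block upper-triangular matrix built from invertible diagonal blocks. -/
noncomputable def butU {k l : ℕ} (A : Matrix.GeneralLinearGroup (Fin k) F)
    (B : Matrix.GeneralLinearGroup (Fin l) F) (u : Matrix (Fin k) (Fin l) F) :
    Matrix.GeneralLinearGroup (Fin (k + l)) F where
  val := but k l (↑A) u (↑B)
  inv := but k l (↑A⁻¹) (-((↑A⁻¹ : gl F k) * u * (↑B⁻¹ : gl F l))) (↑B⁻¹)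
  val_inv := by
    rw [but_mul]
    have h1 : (↑A : gl F k) * (↑A⁻¹ : gl F k) = 1 := A.mul_inv
    have h2 : (↑B : gl F l) * (↑B⁻¹ : gl F l) = 1 := B.mul_inv
    have h3 : (↑A : gl F k) * -((↑A⁻¹ : gl F k) * u * (↑B⁻¹ : gl F l)) + u * (↑B⁻¹ : gl F l)
        = 0 := by
      rw [Matrix.mul_neg, ← Matrix.mul_assoc, ← Matrix.mul_assoc, h1, Matrix.one_mul]
      exact neg_add_cancel _
    rw [h1, h2]
    rw [h3, but_one]
  inv_val := by
    rw [but_mul]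
    have h1 : (↑A⁻¹ : gl F k) * (↑A : gl F k) = 1 := A.inv_mul
    have h2 : (↑B⁻¹ : gl F l) * (↑B : gl F l) = 1 := B.inv_mul
    have h3 : (↑A⁻¹ : gl F k) * u + -((↑A⁻¹ : gl F k) * u * (↑B⁻¹ : gl F l)) * (↑B : gl F l)
        = 0 := by
      rw [Matrix.neg_mul, Matrix.mul_assoc, Matrix.mul_assoc, h2]
      simp [Matrix.mul_assoc]
    rw [h1, h2]
    rw [h3, but_one]

lemma butU_val {k l : ℕ} (A : Matrix.GeneralLinearGroup (Fin k) F)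
    (B : Matrix.GeneralLinearGroup (Fin l) F) (u : Matrix (Fin k) (Fin l) F) :
    ((butU A B u : Matrix.GeneralLinearGroup (Fin (k + l)) F) : gl F (k + l))
      = but k l (↑A) u (↑B) := rfl

lemma butU_inv_val {k l : ℕ} (A : Matrix.GeneralLinearGroup (Fin k) F)
    (B : Matrix.GeneralLinearGroup (Fin l) F) :
    (((butU A B 0)⁻¹ : Matrix.GeneralLinearGroup (Fin (k + l)) F) : gl F (k + l))
      = but k l (↑A⁻¹) 0 (↑B⁻¹) := by
  show (butU A B 0).inv = _
  simp [butU]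

lemma unit_sandwich_zero_iff {k l : ℕ} (B : Matrix.GeneralLinearGroup (Fin l) F)
    (A : Matrix.GeneralLinearGroup (Fin k) F) (v : Matrix (Fin l) (Fin k) F) :
    (↑B : gl F l) * v * (↑A⁻¹ : gl F k) = 0 ↔ v = 0 := by
  constructor
  · intro h
    have h2 : v = (↑B⁻¹ : gl F l) * ((↑B : gl F l) * v * (↑A⁻¹ : gl F k)) * (↑A : gl F k) := by
      calc v = ((↑B⁻¹ : gl F l) * ↑B) * v * ((↑A⁻¹ : gl F k) * ↑A) := by
              rw [B.inv_mul, A.inv_mul, Matrix.one_mul, Matrix.mul_one]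
        _ = _ := by simp only [Matrix.mul_assoc]
    rw [h] at h2
    simpa using h2
  · intro h; rw [h]; simp

lemma blk_conjM_butU {k l : ℕ} (A : Matrix.GeneralLinearGroup (Fin k) F)
    (B : Matrix.GeneralLinearGroup (Fin l) F) (m : gl F (k + l)) :
    blk k l (conjM (butU A B 0) m) =
      Matrix.fromBlocks
        ((↑A : gl F k) * Matrix.toBlocks₁₁ (blk k l m) * (↑A⁻¹ : gl F k))
        ((↑A : gl F k) * Matrix.toBlocks₁₂ (blk k l m) * (↑B⁻¹ : gl F l))
        ((↑B : gl F l) * Matrix.toBlocks₂₁ (blk k l m) * (↑A⁻¹ : gl F k))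
        ((↑B : gl F l) * Matrix.toBlocks₂₂ (blk k l m) * (↑B⁻¹ : gl F l)) := by
  have key : conjM (butU A B 0) m
      = but k l (↑A) 0 (↑B) * m * but k l (↑A⁻¹) 0 (↑B⁻¹) := by
    rw [conjM, butU_val, butU_inv_val]
  rw [key]
  conv_lhs => rw [← reindex_blk m, ← Matrix.fromBlocks_toBlocks (blk k l m)]
  rw [but, but]
  simp only [Matrix.reindex_apply, Matrix.submatrix_mul_equiv, Matrix.fromBlocks_multiply]
  rw [blk]
  simp only [Matrix.reindex_apply, Matrix.submatrix_submatrix, Equiv.symm_comp_self,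
    Matrix.submatrix_id_id]
  simp [Matrix.fromBlocks_multiply, Matrix.mul_assoc]

lemma proj_conjM_butU {k l : ℕ} (A : Matrix.GeneralLinearGroup (Fin k) F)
    (B : Matrix.GeneralLinearGroup (Fin l) F) (m : gl F (k + l)) :
    proj k l (conjM (butU A B 0) m) = (conjM A (proj k l m).1, conjM B (proj k l m).2) := by
  unfold proj
  rw [blk_conjM_butU]
  simp only [Matrix.toBlocks_fromBlocks₁₁, Matrix.toBlocks_fromBlocks₂₂]
  rfl

lemma isBUT_conjM_butU {k l : ℕ} (A : Matrix.GeneralLinearGroup (Fin k) F)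
    (B : Matrix.GeneralLinearGroup (Fin l) F) (m : gl F (k + l)) :
    IsBUT k l (conjM (butU A B 0) m) ↔ IsBUT k l m := by
  unfold IsBUT
  rw [blk_conjM_butU, Matrix.toBlocks_fromBlocks₂₁]
  exact unit_sandwich_zero_iff B A _

end Aux3
section Aux4
set_option linter.unusedSectionVars false
set_option maxHeartbeats 1000000
variable {F : Type} [Field F] [Fintype F] [DecidableEq F]

lemma det_eq_of_isBUT {k l : ℕ} (m : gl F (k + l)) (hm : IsBUT k l m) :
    m.det = (proj k l m).1.det * (proj k l m).2.det := by
  conv_lhs => rw [← but_blk m hm]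
  rw [but, Matrix.det_reindex_self, Matrix.det_fromBlocks_zero₂₁]

lemma det_blocks_ne_zero {k l : ℕ} (g : Matrix.GeneralLinearGroup (Fin (k + l)) F)
    (hg : IsBUT k l (↑g : gl F (k + l))) :
    (proj k l (↑g : gl F (k + l))).1.det ≠ 0 ∧ (proj k l (↑g : gl F (k + l))).2.det ≠ 0 := by
  have hdet : (↑g : gl F (k + l)).det ≠ 0 := by
    have h1 : IsUnit (↑g : gl F (k + l)) := ⟨g, rfl⟩
    have := (Matrix.isUnit_iff_isUnit_det _).mp h1
    exact this.ne_zero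
  rw [det_eq_of_isBUT _ hg] at hdet
  exact ⟨left_ne_zero_of_mul hdet, right_ne_zero_of_mul hdet⟩

/-- The group `P^×_{k,l}` is in bijection with `GL_k × GL_l × Mat_{k×l}`. -/
noncomputable def pEquiv (k l : ℕ) :
    {g : Matrix.GeneralLinearGroup (Fin (k + l)) F // IsBUT k l (↑g : gl F (k + l))} ≃
      (Matrix.GeneralLinearGroup (Fin k) F × Matrix.GeneralLinearGroup (Fin l) F) ×
        Matrix (Fin k) (Fin l) F where
  toFun g :=
    ((Matrix.GeneralLinearGroup.mkOfDetNeZero _ (det_blocks_ne_zero g.1 g.2).1,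
      Matrix.GeneralLinearGroup.mkOfDetNeZero _ (det_blocks_ne_zero g.1 g.2).2),
      Matrix.toBlocks₁₂ (blk k l (↑g.1 : gl F (k + l))))
  invFun p := ⟨butU p.1.1 p.1.2 p.2, by
    unfold IsBUT
    rw [butU_val, blk_but, Matrix.toBlocks_fromBlocks₂₁]⟩
  left_inv g := by
    apply Subtype.ext
    apply Units.ext
    rw [butU_val]
    exact but_blk _ g.2
  right_inv p := by
    obtain ⟨⟨A, B⟩, u⟩ := p
    have hb : blk k l ((butU A B u : Matrix.GeneralLinearGroup (Fin (k + l)) F) : gl F (k + l))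
        = Matrix.fromBlocks (↑A) u 0 (↑B) := by rw [butU_val, blk_but]
    refine Prod.ext (Prod.ext ?_ ?_) ?_
    · apply Units.ext
      show (proj k l _).1 = _
      unfold proj
      rw [hb, Matrix.toBlocks_fromBlocks₁₁]
    · apply Units.ext
      show (proj k l _).2 = _
      unfold proj
      rw [hb, Matrix.toBlocks_fromBlocks₂₂]
    · show Matrix.toBlocks₁₂ _ = u
      rw [hb, Matrix.toBlocks_fromBlocks₁₂]
  
lemma card_matrix (k l : ℕ) :
    Fintype.card (Matrix (Fin k) (Fin l) F) = Fintype.card F ^ (k * l) := by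
  have e : Matrix (Fin k) (Fin l) F ≃ (Fin k → Fin l → F) := Matrix.of.symm
  rw [Fintype.card_congr e, Fintype.card_fun]
  rw [Fintype.card_fun, Fintype.card_fin, Fintype.card_fin, ← pow_mul, Nat.mul_comm]

lemma Pcard_eq (k l : ℕ) :
    Pcard F k l = Fintype.card (Matrix.GeneralLinearGroup (Fin k) F) *
      Fintype.card (Matrix.GeneralLinearGroup (Fin l) F) * Fintype.card F ^ (k * l) := by
  rw [Pcard, Nat.card_congr (pEquiv k l), Nat.card_eq_fintype_card, Fintype.card_prod,
    Fintype.card_prod, card_matrix]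

lemma card_GL_ne_zero (n : ℕ) :
    (Fintype.card (Matrix.GeneralLinearGroup (Fin n) F) : ℂ) ≠ 0 := by
  have : Nonempty (Matrix.GeneralLinearGroup (Fin n) F) := ⟨1⟩
  exact_mod_cast Nat.cast_ne_zero.mpr Fintype.card_ne_zero

lemma Pcard_ne_zero (k l : ℕ) : (Pcard F k l : ℂ) ≠ 0 := by
  rw [Pcard_eq]
  push_cast
  refine mul_ne_zero (mul_ne_zero (card_GL_ne_zero k) (card_GL_ne_zero l)) ?_
  refine pow_ne_zero _ ?_
  have : Nonempty F := ⟨0⟩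
  exact_mod_cast Nat.cast_ne_zero.mpr Fintype.card_ne_zero

end Aux4
section Aux5
set_option linter.unusedSectionVars false
set_option maxHeartbeats 1000000
variable {F : Type} [Field F] [Fintype F] [DecidableEq F]

/-- Transport of `GL` along an equality of sizes. -/
noncomputable def glCast {m n : ℕ} (h : m = n) :
    Matrix.GeneralLinearGroup (Fin m) F ≃* Matrix.GeneralLinearGroup (Fin n) F :=
  Units.mapEquiv (Matrix.reindexAlgEquiv F F (finCongr h)).toRingEquiv.toMulEquiv

lemma glCast_val {m n : ℕ} (h : m = n) (g : Matrix.GeneralLinearGroup (Fin m) F) :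
    ((glCast h g : Matrix.GeneralLinearGroup (Fin n) F) : gl F n) = castM h (↑g : gl F m) := by
  rw [glCast, Units.coe_mapEquiv]
  rfl

lemma glCast_inv_val {m n : ℕ} (h : m = n) (g : Matrix.GeneralLinearGroup (Fin m) F) :
    (((glCast h g)⁻¹ : Matrix.GeneralLinearGroup (Fin n) F) : gl F n)
      = castM h ((↑g⁻¹ : gl F m)) := by
  rw [← map_inv (glCast (F := F) h) g, glCast_val]

lemma castM_mul {m n : ℕ} (h : m = n) (x y : gl F m) :
    castM h (x * y) = castM h x * castM h y := by
  unfold castM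
  simp only [Matrix.reindex_apply]
  rw [Matrix.submatrix_mul_equiv]

lemma conjM_glCast {m n : ℕ} (h : m = n) (g : Matrix.GeneralLinearGroup (Fin m) F)
    (z : gl F m) : conjM (glCast h g) (castM h z) = castM h (conjM g z) := by
  rw [conjM, conjM, glCast_val, glCast_inv_val, castM_mul, castM_mul]

lemma castM_castM {m n : ℕ} (h : m = n) (z : gl F n) : castM h (castM h.symm z) = z := by
  ext i j
  rw [castM_apply, castM_apply]

end Aux5
section Aux6
set_option linter.unusedSectionVars false
set_option maxHeartbeats 1000000
variable {F : Type} [Field F] [Fintype F] [DecidableEq F]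

lemma fin_mk_val {n v : ℕ} (h : v < n) : ((⟨v, h⟩ : Fin n) : ℕ) = v := rfl

lemma assoc_blkA (a b c : ℕ) (m : gl F (a + b + c)) :
    (proj a b (proj (a + b) c m).1).1 = (proj a (b + c) (castM (Nat.add_assoc a b c) m)).1 := by
  ext i j
  simp only [proj_fst_apply, castM_apply]

lemma assoc_blkB (a b c : ℕ) (m : gl F (a + b + c)) :
    (proj a b (proj (a + b) c m).1).2
      = (proj b c (proj a (b + c) (castM (Nat.add_assoc a b c) m)).2).1 := by
  ext i j
  simp only [proj_fst_apply, proj_snd_apply, castM_apply]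

lemma assoc_blkC (a b c : ℕ) (m : gl F (a + b + c)) :
    (proj (a + b) c m).2
      = (proj b c (proj a (b + c) (castM (Nat.add_assoc a b c) m)).2).2 := by
  ext i j
  simp only [proj_snd_apply, castM_apply]
  congr 2 <;> omega

lemma assoc_cond (a b c : ℕ) (m : gl F (a + b + c)) :
    (IsBUT (a + b) c m ∧ IsBUT a b (proj (a + b) c m).1) ↔
    (IsBUT a (b + c) (castM (Nat.add_assoc a b c) m) ∧
      IsBUT b c (proj a (b + c) (castM (Nat.add_assoc a b c) m)).2) := by
  simp only [isBUT_iff, proj_fst_apply, proj_snd_apply, castM_apply]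
  constructor
  · rintro ⟨h1, h2⟩
    constructor
    · intro i j hj hi
      by_cases hib : (i : ℕ) < a + b
      · have := h2 ⟨(i : ℕ), by omega⟩ ⟨(j : ℕ), by omega⟩
          (by (try simp only [fin_mk_val]); omega) (by (try simp only [fin_mk_val]); omega)
        convert this using 2 <;> exact Fin.ext (by (try simp only [fin_mk_val]); omega)
      · have := h1 ⟨(i : ℕ), by omega⟩ ⟨(j : ℕ), by omega⟩
          (by (try simp only [fin_mk_val]); omega) (by (try simp only [fin_mk_val]); omega)
        convert this using 2 <;> exact Fin.ext (by (try simp only [fin_mk_val]); omega)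
    · intro i j hj hi
      by_cases hib2 : a + (i : ℕ) < a + b
      · have := h2 ⟨a + (i : ℕ), by omega⟩ ⟨a + (j : ℕ), by omega⟩
          (by (try simp only [fin_mk_val]); omega) (by (try simp only [fin_mk_val]); omega)
        convert this using 2 <;> exact Fin.ext (by (try simp only [fin_mk_val]); omega)
      · have := h1 ⟨a + (i : ℕ), by omega⟩ ⟨a + (j : ℕ), by omega⟩
          (by (try simp only [fin_mk_val]); omega) (by (try simp only [fin_mk_val]); omega)
        convert this using 2 <;> exact Fin.ext (by (try simp only [fin_mk_val]); omega)
  · rintro ⟨h1, h2⟩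
    constructor
    · intro i j hj hi
      by_cases hja : (j : ℕ) < a
      · have := h1 ⟨(i : ℕ), by omega⟩ ⟨(j : ℕ), by omega⟩
          (by (try simp only [fin_mk_val]); omega) (by (try simp only [fin_mk_val]); omega)
        convert this using 2 <;> exact Fin.ext (by (try simp only [fin_mk_val]); omega)
      · have := h2 ⟨(i : ℕ) - a, by omega⟩ ⟨(j : ℕ) - a, by omega⟩
          (by (try simp only [fin_mk_val]); omega) (by (try simp only [fin_mk_val]); omega)
        convert this using 2 <;> exact Fin.ext (by (try simp only [fin_mk_val]); omega)
    · intro i j hj hi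
      have := h1 ⟨(i : ℕ), by omega⟩ ⟨(j : ℕ), by omega⟩
        (by (try simp only [fin_mk_val]); omega) (by (try simp only [fin_mk_val]); omega)
      convert this using 2 <;> exact Fin.ext (by (try simp only [fin_mk_val]); omega)

end Aux6
section Aux7
set_option linter.unusedSectionVars false
set_option maxHeartbeats 2000000
variable {F : Type} [Field F] [Fintype F] [DecidableEq F]

lemma hcind_apply (k l : ℕ) (hk : k ≠ 0) (hl : l ≠ 0) (φ : gl F k × gl F l → ℂ)
    (z : gl F (k + l)) :
    HCind k l φ z = (Pcard F k l : ℂ)⁻¹ *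
      ∑ G : Matrix.GeneralLinearGroup (Fin (k + l)) F,
        if IsBUT k l (conjM G z) then φ (proj k l (conjM G z)) else 0 := by
  rw [HCind, dif_neg hk, dif_neg hl]

lemma left_expand (a b c : ℕ) (ha : a ≠ 0) (hb : b ≠ 0) (hc : c ≠ 0)
    (f : gl F a → ℂ) (g : gl F b → ℂ) (h : gl F c → ℂ) (z : gl F (a + b + c)) :
    HCind (a + b) c (fun p => HCind a b (fun r => f r.1 * g r.2) p.1 * h p.2) z
      = ((Pcard F (a + b) c : ℂ) * (Pcard F a b : ℂ))⁻¹ *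
          (Fintype.card (Matrix.GeneralLinearGroup (Fin (a + b)) F) : ℂ) *
          ∑ H : Matrix.GeneralLinearGroup (Fin (a + b + c)) F,
            if IsBUT (a + b) c (conjM H z) ∧ IsBUT a b (proj (a + b) c (conjM H z)).1 then
              f (proj a b (proj (a + b) c (conjM H z)).1).1 *
                g (proj a b (proj (a + b) c (conjM H z)).1).2 *
                h (proj (a + b) c (conjM H z)).2
            else 0 := by
  have hab : a + b ≠ 0 := by omega
  rw [hcind_apply (a + b) c hab hc]
  have step1 : ∀ G : Matrix.GeneralLinearGroup (Fin (a + b + c)) F,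
      (if IsBUT (a + b) c (conjM G z) then
          (fun p => HCind a b (fun r => f r.1 * g r.2) p.1 * h p.2) (proj (a + b) c (conjM G z))
        else 0)
      = (Pcard F a b : ℂ)⁻¹ *
          ∑ G' : Matrix.GeneralLinearGroup (Fin (a + b)) F,
            if IsBUT (a + b) c (conjM G z) ∧
                IsBUT a b (conjM G' (proj (a + b) c (conjM G z)).1) then
              f (proj a b (conjM G' (proj (a + b) c (conjM G z)).1)).1 *
                g (proj a b (conjM G' (proj (a + b) c (conjM G z)).1)).2 *
                h (proj (a + b) c (conjM G z)).2
            else 0 := by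
    intro G
    by_cases hT : IsBUT (a + b) c (conjM G z)
    · rw [if_pos hT]
      simp only
      rw [hcind_apply a b ha hb, mul_assoc, Finset.sum_mul]
      refine congrArg _ ?_
      apply Finset.sum_congr rfl
      intro G' _
      rw [ite_mul, zero_mul]
      simp [hT]
    · rw [if_neg hT]
      simp [hT]
  rw [Finset.sum_congr rfl fun G _ => step1 G, ← Finset.mul_sum, Finset.sum_comm]
  have key : ∀ G' : Matrix.GeneralLinearGroup (Fin (a + b)) F,
      (∑ G : Matrix.GeneralLinearGroup (Fin (a + b + c)) F,
        if IsBUT (a + b) c (conjM G z) ∧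
            IsBUT a b (conjM G' (proj (a + b) c (conjM G z)).1) then
          f (proj a b (conjM G' (proj (a + b) c (conjM G z)).1)).1 *
            g (proj a b (conjM G' (proj (a + b) c (conjM G z)).1)).2 *
            h (proj (a + b) c (conjM G z)).2 else 0)
      = ∑ H : Matrix.GeneralLinearGroup (Fin (a + b + c)) F,
          if IsBUT (a + b) c (conjM H z) ∧ IsBUT a b (proj (a + b) c (conjM H z)).1 then
            f (proj a b (proj (a + b) c (conjM H z)).1).1 *
              g (proj a b (proj (a + b) c (conjM H z)).1).2 *
              h (proj (a + b) c (conjM H z)).2 else 0 := by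
    intro G'
    conv_rhs => rw [← Equiv.sum_comp
      (Equiv.mulLeft (butU G' (1 : Matrix.GeneralLinearGroup (Fin c) F) 0))]
    apply Finset.sum_congr rfl
    intro G _
    simp only [Equiv.coe_mulLeft, conjM_mul, proj_conjM_butU, isBUT_conjM_butU, conjM_one]
  rw [Finset.sum_congr rfl fun G' _ => key G', Finset.sum_const, Finset.card_univ,
    nsmul_eq_mul, mul_inv]
  ring

lemma right_expand (a b c : ℕ) (ha : a ≠ 0) (hb : b ≠ 0) (hc : c ≠ 0)
    (f : gl F a → ℂ) (g : gl F b → ℂ) (h : gl F c → ℂ) (z : gl F (a + (b + c))) :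
    HCind a (b + c) (fun p => f p.1 * HCind b c (fun r => g r.1 * h r.2) p.2) z
      = ((Pcard F a (b + c) : ℂ) * (Pcard F b c : ℂ))⁻¹ *
          (Fintype.card (Matrix.GeneralLinearGroup (Fin (b + c)) F) : ℂ) *
          ∑ H : Matrix.GeneralLinearGroup (Fin (a + (b + c))) F,
            if IsBUT a (b + c) (conjM H z) ∧ IsBUT b c (proj a (b + c) (conjM H z)).2 then
              f (proj a (b + c) (conjM H z)).1 *
                (g (proj b c (proj a (b + c) (conjM H z)).2).1 *
                  h (proj b c (proj a (b + c) (conjM H z)).2).2)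
            else 0 := by
  have hbc : b + c ≠ 0 := by omega
  rw [hcind_apply a (b + c) ha hbc]
  have step1 : ∀ G : Matrix.GeneralLinearGroup (Fin (a + (b + c))) F,
      (if IsBUT a (b + c) (conjM G z) then
          (fun p => f p.1 * HCind b c (fun r => g r.1 * h r.2) p.2) (proj a (b + c) (conjM G z))
        else 0)
      = (Pcard F b c : ℂ)⁻¹ *
          ∑ G' : Matrix.GeneralLinearGroup (Fin (b + c)) F,
            if IsBUT a (b + c) (conjM G z) ∧
                IsBUT b c (conjM G' (proj a (b + c) (conjM G z)).2) then
              f (proj a (b + c) (conjM G z)).1 *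
                (g (proj b c (conjM G' (proj a (b + c) (conjM G z)).2)).1 *
                  h (proj b c (conjM G' (proj a (b + c) (conjM G z)).2)).2)
            else 0 := by
    intro G
    by_cases hT : IsBUT a (b + c) (conjM G z)
    · rw [if_pos hT]
      simp only
      rw [hcind_apply b c hb hc, mul_left_comm, Finset.mul_sum]
      refine congrArg _ ?_
      apply Finset.sum_congr rfl
      intro G' _
      rw [mul_ite, mul_zero]
      simp [hT]
    · rw [if_neg hT]
      simp [hT]
  rw [Finset.sum_congr rfl fun G _ => step1 G, ← Finset.mul_sum, Finset.sum_comm]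
  have key : ∀ G' : Matrix.GeneralLinearGroup (Fin (b + c)) F,
      (∑ G : Matrix.GeneralLinearGroup (Fin (a + (b + c))) F,
        if IsBUT a (b + c) (conjM G z) ∧
            IsBUT b c (conjM G' (proj a (b + c) (conjM G z)).2) then
          f (proj a (b + c) (conjM G z)).1 *
            (g (proj b c (conjM G' (proj a (b + c) (conjM G z)).2)).1 *
              h (proj b c (conjM G' (proj a (b + c) (conjM G z)).2)).2) else 0)
      = ∑ H : Matrix.GeneralLinearGroup (Fin (a + (b + c))) F,
          if IsBUT a (b + c) (conjM H z) ∧ IsBUT b c (proj a (b + c) (conjM H z)).2 then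
            f (proj a (b + c) (conjM H z)).1 *
              (g (proj b c (proj a (b + c) (conjM H z)).2).1 *
                h (proj b c (proj a (b + c) (conjM H z)).2).2) else 0 := by
    intro G'
    conv_rhs => rw [← Equiv.sum_comp
      (Equiv.mulLeft (butU (1 : Matrix.GeneralLinearGroup (Fin a) F) G' 0))]
    apply Finset.sum_congr rfl
    intro G _
    simp only [Equiv.coe_mulLeft, conjM_mul, proj_conjM_butU, isBUT_conjM_butU, conjM_one]
  rw [Finset.sum_congr rfl fun G' _ => key G', Finset.sum_const, Finset.card_univ,
    nsmul_eq_mul, mul_inv]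
  ring

end Aux7
section Const
set_option linter.unusedSectionVars false
set_option maxHeartbeats 2000000
variable {F : Type} [Field F] [Fintype F] [DecidableEq F]

lemma const_eq (a b c : ℕ) :
    ((Pcard F a (b + c) : ℂ) * (Pcard F b c : ℂ))⁻¹ *
        (Fintype.card (Matrix.GeneralLinearGroup (Fin (b + c)) F) : ℂ)
      = ((Pcard F (a + b) c : ℂ) * (Pcard F a b : ℂ))⁻¹ *
        (Fintype.card (Matrix.GeneralLinearGroup (Fin (a + b)) F) : ℂ) := by
  rw [Pcard_eq, Pcard_eq, Pcard_eq, Pcard_eq]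
  push_cast
  have hq : (Fintype.card F : ℂ) ≠ 0 := by
    have : Nonempty F := ⟨0⟩
    exact_mod_cast Nat.cast_ne_zero.mpr Fintype.card_ne_zero
  have h1 := card_GL_ne_zero (F := F) a
  have h2 := card_GL_ne_zero (F := F) b
  have h3 := card_GL_ne_zero (F := F) c
  have h4 := card_GL_ne_zero (F := F) (a + b)
  have h5 := card_GL_ne_zero (F := F) (b + c)
  have he : a * (b + c) + b * c = (a + b) * c + a * b := by ring
  field_simp
  rw [show (a + b) * c = a * c + b * c by ring, show a * (b + c) = a * b + a * c by ring,
    pow_add, pow_add]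
  ring
end Const

/-- Harish-Chandra induction is associative. -/
theorem HCind_assoc (F : Type) [Field F] [Fintype F] [DecidableEq F]
    (a b c : ℕ) (ha : 1 ≤ a) (hb : 1 ≤ b) (hc : 1 ≤ c)
    (f : gl F a → ℂ) (g : gl F b → ℂ) (h : gl F c → ℂ)
    (hf : Invariant a f) (hg : Invariant b g) (hh : Invariant c h) :
    castFun (Nat.add_assoc a b c)
      (HCind (a + b) c fun p => HCind a b (fun r => f r.1 * g r.2) p.1 * h p.2) =
    HCind a (b + c) fun p => f p.1 * HCind b c (fun r => g r.1 * h r.2) p.2 := by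
  have ha0 : a ≠ 0 := by omega
  have hb0 : b ≠ 0 := by omega
  have hc0 : c ≠ 0 := by omega
  funext z
  show (HCind (a + b) c fun p => HCind a b (fun r => f r.1 * g r.2) p.1 * h p.2)
      (castM (Nat.add_assoc a b c).symm z) = _
  set z' : gl F (a + b + c) := castM (Nat.add_assoc a b c).symm z with hz'
  have hzz : castM (Nat.add_assoc a b c) z' = z := castM_castM _ z
  rw [left_expand a b c ha0 hb0 hc0 f g h z', right_expand a b c ha0 hb0 hc0 f g h z]
  have hsum :
      (∑ H : Matrix.GeneralLinearGroup (Fin (a + (b + c))) F,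
        if IsBUT a (b + c) (conjM H z) ∧ IsBUT b c (proj a (b + c) (conjM H z)).2 then
          f (proj a (b + c) (conjM H z)).1 *
            (g (proj b c (proj a (b + c) (conjM H z)).2).1 *
              h (proj b c (proj a (b + c) (conjM H z)).2).2)
        else 0)
      = ∑ H : Matrix.GeneralLinearGroup (Fin (a + b + c)) F,
          if IsBUT (a + b) c (conjM H z') ∧ IsBUT a b (proj (a + b) c (conjM H z')).1 then
            f (proj a b (proj (a + b) c (conjM H z')).1).1 *
              g (proj a b (proj (a + b) c (conjM H z')).1).2 *
              h (proj (a + b) c (conjM H z')).2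
          else 0 := by
    rw [← Equiv.sum_comp ((glCast (F := F) (Nat.add_assoc a b c)) :
        Matrix.GeneralLinearGroup (Fin (a + b + c)) F ≃*
          Matrix.GeneralLinearGroup (Fin (a + (b + c))) F).toEquiv]
    apply Finset.sum_congr rfl
    intro H _
    have hm : conjM ((glCast (F := F) (Nat.add_assoc a b c)).toEquiv H) z
        = castM (Nat.add_assoc a b c) (conjM H z') := by
      rw [← hzz]
      exact conjM_glCast _ H z'
    rw [hm, ← assoc_blkA a b c (conjM H z'), ← assoc_blkB a b c (conjM H z'),
      ← assoc_blkC a b c (conjM H z')]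
    exact if_congr (assoc_cond a b c (conjM H z')).symm (mul_assoc _ _ _).symm rfl
  rw [hsum, const_eq]
end HCPaper
end

section
/- For all k, l ≥ 1 and invariant functions f ∈ C_k, g ∈ C_l, Harish-Chandra induction is commutative: R^{k+l}_{k,l}(f ⊠ g) = R^{k+l}_{l,k}(g ⊠ f), where f ⊠ g denotes the function (x,y) ↦ f(x)·g(y). -/
open Matrix BigOperators

namespace HCPaper

open scoped Classical

variable {F : Type} [Field F] [Fintype F] [DecidableEq F]

/-! ### Auxiliary material for the proof -/

section TransposeConj

open Polynomial DirectSum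

variable {K : Type} [Field K]

lemma HC_quot_form {q : K[X]} (hq : q.Monic) :
    ∃ b : (K[X] ⧸ Ideal.span {q}) →ₗ[K] (K[X] ⧸ Ideal.span {q}) →ₗ[K] K,
      (∀ (c : K[X]) (x y), b (c • x) y = b x (c • y)) ∧
      (∀ x, (∀ y, b x y = 0) → x = 0) := by
  classical
  set Q := K[X] ⧸ Ideal.span {q} with hQ
  set lam : Q →ₗ[K] K :=
    ((lcoeff K (q.natDegree - 1)) ∘ₗ (AdjoinRoot.modByMonicHom hq) : _) with hlam
  set mkq : K[X] → Q := fun w => AdjoinRoot.mk q w with hmkq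
  have hml : ∀ w : K[X], lam (mkq w) = (w %ₘ q).coeff (q.natDegree - 1) := by
    intro w
    show (lcoeff K (q.natDegree - 1)) ((AdjoinRoot.modByMonicHom hq) ((AdjoinRoot.mk q) w)) = _
    rw [AdjoinRoot.modByMonicHom_mk, lcoeff_apply]
  have hsm : ∀ (c w : K[X]), c • (mkq w) = mkq (c * w) :=
    fun c w => (Submodule.Quotient.mk_smul _ c w).symm
  have hmulmk : ∀ (a e : K[X]), (mkq a) * mkq e
      = mkq (a * e) := fun a e => (map_mul (AdjoinRoot.mk q) a e).symm
  set b : Q →ₗ[K] Q →ₗ[K] K :=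
    (LinearMap.mul K Q).compr₂ lam with hb
  have hbapp : ∀ x y, b x y = lam (x * y) := fun x y => rfl
  have hsurj : ∀ x : Q, ∃ w, mkq w = x := AdjoinRoot.mk_surjective
  refine ⟨b, ?_, ?_⟩
  · intro c x y
    obtain ⟨a, rfl⟩ := hsurj x
    obtain ⟨e, rfl⟩ := hsurj y
    rw [hbapp, hbapp, hsm, hsm, hmulmk, hmulmk]
    congr 2
    ring
  · intro x hx
    by_contra hne
    obtain ⟨a, rfl⟩ := hsurj x
    set p : K[X] := a %ₘ q with hp
    have hmk : mkq p = mkq a := by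
      show AdjoinRoot.mk q p = AdjoinRoot.mk q a
      rw [AdjoinRoot.mk_eq_mk]
      refine ⟨-(a /ₘ q), ?_⟩
      have h2 := modByMonic_add_div a q
      linear_combination h2
    have hpne : p ≠ 0 := by
      intro h0
      apply hne
      rw [← hmk, h0]
      exact map_zero (AdjoinRoot.mk q)
    have hdeg : p.degree < q.degree := degree_modByMonic_lt a hq
    have hqne : q ≠ 0 := hq.ne_zero
    have hnd : p.natDegree < q.natDegree := natDegree_lt_natDegree hpne hdeg
    set e₀ : ℕ := p.natDegree with he₀
    set kk : ℕ := q.natDegree - 1 - e₀ with hkk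
    have hsum : e₀ + kk = q.natDegree - 1 := by omega
    have h3 := hx (mkq (X ^ kk))
    rw [hbapp, ← hmk, hmulmk, hml] at h3
    have hdeg2 : (p * X ^ kk).degree < q.degree := by
      rw [degree_mul, degree_X_pow, degree_eq_natDegree hpne, degree_eq_natDegree hqne,
        ← Nat.cast_add]
      exact_mod_cast by omega
    have hmod : (p * X ^ kk) %ₘ q = p * X ^ kk := (modByMonic_eq_self_iff hq).mpr hdeg2
    rw [hmod, ← hsum, coeff_mul_X_pow] at h3
    exact (mt leadingCoeff_eq_zero.mp hpne) h3

lemma HC_cyclic_form (g : K[X]) (hg : g ≠ 0) :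
    ∃ b : (K[X] ⧸ (K[X] ∙ g)) →ₗ[K] (K[X] ⧸ (K[X] ∙ g)) →ₗ[K] K,
      (∀ (c : K[X]) (x y), b (c • x) y = b x (c • y)) ∧
      (∀ x, (∀ y, b x y = 0) → x = 0) := by
  classical
  have hq : (g * C (g.leadingCoeff)⁻¹).Monic := monic_mul_leadingCoeff_inv hg
  have hspan : (K[X] ∙ g) = Ideal.span {g * C (g.leadingCoeff)⁻¹} := by
    rw [Ideal.submodule_span_eq]
    rw [Ideal.span_singleton_eq_span_singleton]
    exact ⟨Units.mkOfMulEqOne (C (g.leadingCoeff)⁻¹) (C (g.leadingCoeff))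
      (by rw [← C_mul, inv_mul_cancel₀ (leadingCoeff_ne_zero.mpr hg), C_1]), rfl⟩
  rw [hspan]
  exact HC_quot_form hq

set_option maxHeartbeats 1000000 in
lemma HC_exists_balanced_form (n : ℕ) (φ : (Fin n → K) →ₗ[K] (Fin n → K)) :
    ∃ B : (Fin n → K) →ₗ[K] (Fin n → K) →ₗ[K] K,
      (∀ v w, B (φ v) w = B v (φ w)) ∧ (∀ v, (∀ w, B v w = 0) → v = 0) := by
  classical
  have htors : Module.IsTorsion K[X] (Module.AEval' φ) :=
    Module.AEval.isTorsion_of_finiteDimensional K (Fin n → K) φ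
  obtain ⟨ι, hι, p, hp, e, ⟨f⟩⟩ := Module.equiv_directSum_of_isTorsion htors
  haveI := hι
  have hpe : ∀ i, (p i ^ e i) ≠ 0 := fun i => pow_ne_zero _ (hp i).ne_zero
  choose b hb1 hb2 using fun i => HC_cyclic_form (K := K) (p i ^ e i) (hpe i)
  let E : (Fin n → K) ≃ₗ[K] (⨁ i, K[X] ⧸ (K[X] ∙ (p i ^ e i))) :=
    (Module.AEval'.of φ).trans (f.restrictScalars K)
  have hEphi : ∀ v, E (φ v) = (X : K[X]) • E v := by
    intro v
    show (f.restrictScalars K) ((Module.AEval'.of φ) (φ v)) = _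
    rw [← Module.AEval'.X_smul_of]
    show f ((X : K[X]) • (Module.AEval'.of φ) v) = _
    rw [_root_.map_smul]
    rfl
  refine ⟨LinearMap.mk₂ K (fun v w => ∑ i, b i (E v i) (E w i))
      (fun v v' w => by
        rw [← Finset.sum_add_distrib]
        refine Finset.sum_congr rfl fun i _ => ?_
        rw [map_add, DirectSum.add_apply, map_add, LinearMap.add_apply])
      (fun c v w => by
        rw [Finset.smul_sum]
        refine Finset.sum_congr rfl fun i _ => ?_
        rw [_root_.map_smul, DFinsupp.smul_apply, _root_.map_smul, LinearMap.smul_apply])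
      (fun v w w' => by
        rw [← Finset.sum_add_distrib]
        refine Finset.sum_congr rfl fun i _ => ?_
        rw [map_add, DirectSum.add_apply, map_add])
      (fun c v w => by
        rw [Finset.smul_sum]
        refine Finset.sum_congr rfl fun i _ => ?_
        rw [_root_.map_smul, DFinsupp.smul_apply, _root_.map_smul]),
      ?_, ?_⟩
  · intro v w
    simp only [LinearMap.mk₂_apply]
    rw [hEphi v, hEphi w]
    refine Finset.sum_congr rfl fun i _ => ?_
    rw [DFinsupp.smul_apply, DFinsupp.smul_apply]
    exact hb1 i X _ _
  · intro v hv
    by_contra hne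
    have hEv : E v ≠ 0 := fun h0 => hne (E.map_eq_zero_iff.mp h0)
    obtain ⟨i0, hi0⟩ : ∃ i, E v i ≠ 0 := by
      by_contra hall
      push_neg at hall
      exact hEv (DFinsupp.ext hall)
    obtain ⟨y0, hy0⟩ : ∃ y, b i0 (E v i0) y ≠ 0 := by
      by_contra hall
      push_neg at hall
      exact hi0 (hb2 i0 _ hall)
    apply hy0
    have h4 := hv (E.symm (DirectSum.of _ i0 y0))
    simp only [LinearMap.mk₂_apply, LinearEquiv.apply_symm_apply] at h4
    rw [Finset.sum_eq_single i0] at h4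
    · rwa [DirectSum.of_eq_same] at h4
    · intro j _ hji
      rw [DirectSum.of_eq_of_ne _ _ _ hji, map_zero]
    · intro h
      exact absurd (Finset.mem_univ i0) h

theorem HC_exists_conj_transpose (n : ℕ) (A : Matrix (Fin n) (Fin n) K) :
    ∃ P : Matrix (Fin n) (Fin n) K, IsUnit P ∧ P * A = Aᵀ * P := by
  classical
  obtain ⟨B, hbal, hnd⟩ := HC_exists_balanced_form n A.mulVecLin
  set P : Matrix (Fin n) (Fin n) K :=
    Matrix.of (fun i j => B (Pi.single i 1) (Pi.single j 1)) with hP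
  have hBP : ∀ v w, B v w = v ⬝ᵥ (P *ᵥ w) := by
    intro v w
    have hv : v = ∑ i, v i • (Pi.single i (1 : K) : Fin n → K) := by
      funext j
      simp [Pi.single_apply, Finset.sum_apply, mul_comm]
    have hw : w = ∑ j, w j • (Pi.single j (1 : K) : Fin n → K) := by
      funext j
      simp [Pi.single_apply, Finset.sum_apply, mul_comm]
    conv_lhs => rw [hv, hw]
    simp only [map_sum, _root_.map_smul, LinearMap.sum_apply, LinearMap.smul_apply, smul_eq_mul]
    simp only [dotProduct, Matrix.mulVec, Finset.mul_sum, Finset.sum_mul]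
    rw [Finset.sum_comm]
    refine Finset.sum_congr rfl fun x _ => ?_
    refine Finset.sum_congr rfl fun y _ => ?_
    simp [hP, Pi.single_apply, mul_comm, mul_left_comm]
  have hPA : P * A = Aᵀ * P := by
    ext i j
    have h := hbal (Pi.single i 1) (Pi.single j 1)
    rw [hBP, hBP] at h
    simp only [Matrix.mulVecLin_apply, Matrix.mulVec_mulVec] at h
    have e1 : (A *ᵥ Pi.single i 1) ⬝ᵥ (P *ᵥ Pi.single j 1) = (Aᵀ * P) i j := by
      simp [Matrix.mulVec_single, dotProduct, Matrix.mul_apply, mul_comm]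
    have e2 : Pi.single i 1 ⬝ᵥ ((P * A) *ᵥ Pi.single j 1) = (P * A) i j := by
      simp [Matrix.mulVec_single, single_dotProduct]
    rw [e1, e2] at h
    exact h.symm
  refine ⟨P, ?_, hPA⟩
  have hdet : P.det ≠ 0 := by
    intro h0
    have h1 : Pᵀ.det = 0 := by rw [Matrix.det_transpose]; exact h0
    obtain ⟨v, hv0, hv⟩ := (Matrix.exists_mulVec_eq_zero_iff).mpr h1
    apply hv0
    apply hnd
    intro w
    rw [Matrix.mulVec_transpose] at hv
    rw [hBP, Matrix.dotProduct_mulVec, hv, zero_dotProduct]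
  exact (Matrix.isUnit_iff_isUnit_det P).mpr (isUnit_iff_ne_zero.mpr hdet)

end TransposeConj

section CombPart

variable {F : Type} [Field F] [Fintype F] [DecidableEq F]

lemma conjM_conjM {n : ℕ} (g u : Matrix.GeneralLinearGroup (Fin n) F) (z : gl F n) :
    conjM g (conjM u z) = conjM (g * u) z := by
  simp only [conjM, Units.val_mul, _root_.mul_inv_rev]
  noncomm_ring

lemma conjM_transpose {n : ℕ} (x : gl F n) :
    ∃ u : Matrix.GeneralLinearGroup (Fin n) F, conjM u x = xᵀ := by
  obtain ⟨P, hP, hc⟩ := HC_exists_conj_transpose n x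
  refine ⟨hP.unit, ?_⟩
  show (hP.unit : Matrix (Fin n) (Fin n) F) * x * ((hP.unit⁻¹ :
    Matrix.GeneralLinearGroup (Fin n) F) : Matrix (Fin n) (Fin n) F) = xᵀ
  rw [IsUnit.unit_spec, hc, mul_assoc]
  have h2 : P * ((hP.unit⁻¹ : Matrix.GeneralLinearGroup (Fin n) F) :
      Matrix (Fin n) (Fin n) F) = 1 := by
    have h3 := Units.mul_inv hP.unit
    rwa [IsUnit.unit_spec] at h3
  rw [h2, mul_one]

lemma Invariant.transpose_eq {n : ℕ} {φ : gl F n → ℂ} (hφ : Invariant n φ) (x : gl F n) :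
    φ xᵀ = φ x := by
  obtain ⟨u, hu⟩ := conjM_transpose (F := F) x
  rw [← hu, hφ]

/-- The index equivalence swapping the two blocks. -/
def swapIdx (k l : ℕ) : Fin (k + l) ≃ Fin (l + k) :=
  (finSumFinEquiv.symm.trans (Equiv.sumComm (Fin k) (Fin l))).trans finSumFinEquiv

lemma swapIdx_trans (k l : ℕ) : (swapIdx k l).trans (swapIdx l k) = Equiv.refl _ := by
  ext x
  simp [swapIdx]

/-- Transpose combined with swapping the two blocks. -/
def Tmap (k l : ℕ) (M : gl F (k + l)) : gl F (l + k) :=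
  Matrix.reindex (swapIdx k l) (swapIdx k l) Mᵀ

lemma reindex_sq {m n o : Type*} (e1 : m ≃ n) (e2 : n ≃ o) (M : Matrix m m F) :
    Matrix.reindex e2 e2 (Matrix.reindex e1 e1 M)
      = Matrix.reindex (e1.trans e2) (e1.trans e2) M := by
  ext i j
  simp [Matrix.reindex_apply, Matrix.submatrix_apply]

lemma Tmap_Tmap (k l : ℕ) (M : gl F (k + l)) : Tmap l k (Tmap k l M) = M := by
  simp only [Tmap, Matrix.transpose_reindex, Matrix.transpose_transpose,
    reindex_sq, swapIdx_trans]
  rfl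

lemma Tmap_mul (k l : ℕ) (A B : gl F (k + l)) :
    Tmap k l A * Tmap k l B = Tmap k l (B * A) := by
  simp only [Tmap, Matrix.reindex_apply, Matrix.transpose_mul]
  exact Matrix.submatrix_mul_equiv Aᵀ Bᵀ _ (swapIdx k l).symm _

lemma Tmap_one (k l : ℕ) : Tmap k l (1 : gl F (k + l)) = 1 := by
  simp only [Tmap, Matrix.transpose_one, Matrix.reindex_apply]
  exact Matrix.submatrix_one_equiv (swapIdx k l).symm

/-- The group anti-automorphism `GL_{k+l} ≃ GL_{l+k}`. -/
def glSwap (k l : ℕ) : Matrix.GeneralLinearGroup (Fin (k + l)) F ≃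
    Matrix.GeneralLinearGroup (Fin (l + k)) F where
  toFun g := ⟨Tmap k l (g⁻¹ : _), Tmap k l (g : _),
    by rw [Tmap_mul, Units.mul_inv, Tmap_one],
    by rw [Tmap_mul, Units.inv_mul, Tmap_one]⟩
  invFun g := ⟨Tmap l k (g⁻¹ : _), Tmap l k (g : _),
    by rw [Tmap_mul, Units.mul_inv, Tmap_one],
    by rw [Tmap_mul, Units.inv_mul, Tmap_one]⟩
  left_inv g := Units.ext (Tmap_Tmap k l (g : Matrix (Fin (k + l)) (Fin (k + l)) F))
  right_inv g := Units.ext (Tmap_Tmap l k (g : Matrix (Fin (l + k)) (Fin (l + k)) F))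

lemma glSwap_val (k l : ℕ) (g : Matrix.GeneralLinearGroup (Fin (k + l)) F) :
    ((glSwap k l g : Matrix.GeneralLinearGroup (Fin (l + k)) F) :
      Matrix (Fin (l + k)) (Fin (l + k)) F) = Tmap k l (g⁻¹ : _) := rfl

lemma glSwap_inv_val (k l : ℕ) (g : Matrix.GeneralLinearGroup (Fin (k + l)) F) :
    (((glSwap k l g)⁻¹ : Matrix.GeneralLinearGroup (Fin (l + k)) F) :
      Matrix (Fin (l + k)) (Fin (l + k)) F) = Tmap k l (g : _) := rfl

lemma toBlocks21_Tmap (k l : ℕ) (M : gl F (k + l)) :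
    Matrix.toBlocks₂₁ (blk l k (Tmap k l M)) = (Matrix.toBlocks₂₁ (blk k l M))ᵀ := by
  ext i j
  simp [blk, Tmap, Matrix.toBlocks₂₁, swapIdx, Matrix.reindex_apply, Matrix.submatrix_apply]

lemma isBUT_Tmap (k l : ℕ) (M : gl F (k + l)) :
    IsBUT l k (Tmap k l M) ↔ IsBUT k l M := by
  unfold IsBUT
  rw [toBlocks21_Tmap, Matrix.transpose_eq_zero]

lemma proj_Tmap (k l : ℕ) (M : gl F (k + l)) :
    proj l k (Tmap k l M) = ((proj k l M).2ᵀ, (proj k l M).1ᵀ) := by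
  unfold proj
  refine Prod.ext ?_ ?_
  · ext i j
    simp [blk, Tmap, Matrix.toBlocks₁₁, Matrix.toBlocks₂₂, swapIdx, Matrix.reindex_apply,
      Matrix.submatrix_apply]
  · ext i j
    simp [blk, Tmap, Matrix.toBlocks₁₁, Matrix.toBlocks₂₂, swapIdx, Matrix.reindex_apply,
      Matrix.submatrix_apply]

/-- The permutation matrix of `w` as an element of `GL`. -/
def permGL {m : ℕ} (w : Fin m ≃ Fin m) : Matrix.GeneralLinearGroup (Fin m) F :=
  ⟨(1 : gl F m).submatrix ⇑w.symm id, (1 : gl F m).submatrix id ⇑w.symm,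
    by
      have := Matrix.submatrix_mul_equiv (1 : gl F m) (1 : gl F m) ⇑w.symm (Equiv.refl _) ⇑w.symm
      simpa using this,
    by
      have := Matrix.submatrix_mul_equiv (1 : gl F m) (1 : gl F m) id w.symm id
      simpa using this⟩

lemma conjM_permGL {m : ℕ} (w : Fin m ≃ Fin m) (y : gl F m) :
    conjM (permGL (F := F) w) y = Matrix.reindex w w y := by
  show ((1 : gl F m).submatrix ⇑w.symm id) * y * (((permGL (F := F) w)⁻¹ : _) :
    Matrix (Fin m) (Fin m) F) = _
  have hinv : (((permGL (F := F) w)⁻¹ : _) : Matrix (Fin m) (Fin m) F)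
      = (1 : gl F m).submatrix id ⇑w.symm := rfl
  rw [hinv]
  have h1 : ((1 : gl F m).submatrix ⇑w.symm id) * y
      = y.submatrix ⇑w.symm id := by
    have := Matrix.submatrix_mul_equiv (1 : gl F m) y ⇑w.symm (Equiv.refl _) id
    simpa using this
  rw [h1]
  have h2 : (y.submatrix ⇑w.symm id) * ((1 : gl F m).submatrix id ⇑w.symm)
      = y.submatrix ⇑w.symm ⇑w.symm := by
    have := Matrix.submatrix_mul_equiv y (1 : gl F m) ⇑w.symm (Equiv.refl _) ⇑w.symm
    simpa using this
  rw [h2, Matrix.reindex_apply]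

/-- The inner sum appearing in Harish-Chandra induction. -/
noncomputable def Ssum (k l : ℕ) (h : gl F k × gl F l → ℂ) (z : gl F (k + l)) : ℂ :=
  ∑ g : Matrix.GeneralLinearGroup (Fin (k + l)) F,
    if IsBUT k l (conjM g z) then h (proj k l (conjM g z)) else 0

lemma Ssum_conj (k l : ℕ) (h : gl F k × gl F l → ℂ)
    (u : Matrix.GeneralLinearGroup (Fin (k + l)) F) (z : gl F (k + l)) :
    Ssum k l h (conjM u z) = Ssum k l h z := by
  refine Fintype.sum_equiv (Equiv.mulRight u) _ _ fun g => ?_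
  rw [Equiv.coe_mulRight, ← conjM_conjM]

lemma Ssum_transpose (k l : ℕ) (h : gl F k × gl F l → ℂ) (z : gl F (k + l)) :
    Ssum k l h zᵀ = Ssum k l h z := by
  obtain ⟨u, hu⟩ := conjM_transpose (F := F) z
  rw [← hu, Ssum_conj]

lemma Pcard_comm (k l : ℕ) : Pcard F k l = Pcard F l k := by
  apply Nat.card_congr
  refine Equiv.subtypeEquiv ((Equiv.inv _).trans (glSwap k l)) fun g => ?_
  simp only [Equiv.trans_apply, Equiv.inv_apply, glSwap_val, inv_inv]
  exact (isBUT_Tmap k l _).symm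

end CombPart

/-- Harish-Chandra induction is commutative. -/
theorem HCind_comm (F : Type) [Field F] [Fintype F] [DecidableEq F]
    (k l : ℕ) (hk : 1 ≤ k) (hl : 1 ≤ l)
    (f : gl F k → ℂ) (g : gl F l → ℂ)
    (hf : Invariant k f) (hg : Invariant l g) :
    HCind k l (fun p => f p.1 * g p.2) =
      castFun (Nat.add_comm l k) (HCind l k (fun p => g p.1 * f p.2)) := by
  classical
  funext z
  have hk0 : k ≠ 0 := by omega
  have hl0 : l ≠ 0 := by omega
  show HCind k l (fun p => f p.1 * g p.2) z
      = HCind l k (fun p => g p.1 * f p.2) (castM (Nat.add_comm l k).symm z)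
  rw [HCind, HCind, dif_neg hk0, dif_neg hl0, dif_neg hl0, dif_neg hk0]
  set h₁ : gl F k × gl F l → ℂ := fun p => f p.1 * g p.2 with hh₁
  set h₂ : gl F l × gl F k → ℂ := fun p => g p.1 * f p.2 with hh₂
  set z' : gl F (l + k) := castM (Nat.add_comm l k).symm z with hz'
  set zhat : gl F (k + l) := Tmap l k z' with hzhat
  have hz'T : z' = Tmap k l zhat := (Tmap_Tmap l k z').symm
  have hS1 : Ssum l k h₂ z' = Ssum k l h₁ zhat := by
    unfold Ssum
    refine (Fintype.sum_equiv (glSwap k l) _ _ fun gg => ?_).symm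
    have hc : conjM (glSwap k l gg) z' = Tmap k l (conjM gg zhat) := by
      show (glSwap k l gg : Matrix _ _ F) * z' * (((glSwap k l gg)⁻¹ : _) : Matrix _ _ F)
          = Tmap k l (conjM gg zhat)
      rw [glSwap_val, glSwap_inv_val, hz'T, Tmap_mul, Tmap_mul]
      show Tmap k l ((gg : Matrix _ _ F) * (zhat * ((gg⁻¹ : _) : Matrix _ _ F))) = _
      rw [conjM]
      rw [mul_assoc]
    rw [hc]
    rw [if_congr (isBUT_Tmap k l _) (by rw [proj_Tmap]) rfl]
    congr 1
    show h₁ (proj k l (conjM gg zhat)) = h₂ ((proj k l (conjM gg zhat)).2ᵀ,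
      (proj k l (conjM gg zhat)).1ᵀ)
    rw [hh₁, hh₂]
    simp only
    rw [hg.transpose_eq, hf.transpose_eq, mul_comm]
  have hS2 : Ssum k l h₁ zhat = Ssum k l h₁ z := by
    have hzw : zhat = Matrix.reindex ((finCongr (Nat.add_comm k l)).trans (swapIdx l k))
        ((finCongr (Nat.add_comm k l)).trans (swapIdx l k)) zᵀ := by
      rw [hzhat, hz', Tmap, castM]
      rw [Matrix.transpose_reindex, reindex_sq]
    rw [hzw, ← conjM_permGL, Ssum_conj, Ssum_transpose]
  show ((Pcard F k l : ℂ))⁻¹ * Ssum k l h₁ z = ((Pcard F l k : ℂ))⁻¹ * Ssum l k h₂ z'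
  rw [hS1, hS2, Pcard_comm k l]


end HCPaper
end

section
/- For all a, b, c ≥ 1 and f ∈ C_{a+b+c}, Harish-Chandra restriction is coassociative: for all x ∈ gl_a(𝔽_q), y ∈ gl_b(𝔽_q), z ∈ gl_c(𝔽_q), applying *R^{a+b+c}_{a+b,c} to f and then *R^{a+b}_{a,b} in the first variable gives the same value at (x,y,z) as applying *R^{a+b+c}_{a,b+c} to f and then *R^{b+c}_{b,c} in the second variable; explicitly, q^{-ab} Σ_{v ∈ Mat_{a×b}(𝔽_q)} (*R^{a+b+c}_{a+b,c} f)([x v; 0 y], z) = q^{-bc} Σ_{w ∈ Mat_{b×c}(𝔽_q)} (*R^{a+b+c}_{a,b+c} f)(x, [y w; 0 z]). -/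
open Matrix BigOperators

namespace HCPaper

open scoped Classical

variable {F : Type} [Field F] [Fintype F] [DecidableEq F]

-- aux
lemma finSumFinEquiv_symm_eq (k l : ℕ) (m : Fin (k+l)) :
    finSumFinEquiv.symm m =
      if h : (m:ℕ) < k then Sum.inl ⟨m, h⟩ else Sum.inr ⟨m - k, by omega⟩ := by
  by_cases h : (m:ℕ) < k
  · rw [dif_pos h]
    have hm : m = Fin.castAdd l ⟨m, h⟩ := by ext; rfl
    conv_lhs => rw [hm]
    rw [finSumFinEquiv_symm_apply_castAdd]
  · rw [dif_neg h]
    have hm : m = Fin.natAdd k ⟨m - k, by omega⟩ := by ext; simp; omega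
    conv_lhs => rw [hm]
    rw [finSumFinEquiv_symm_apply_natAdd]

lemma but_apply (k l : ℕ) (x : gl F k) (u : Matrix (Fin k) (Fin l) F) (y : gl F l)
    (i j : Fin (k + l)) :
    but k l x u y i j =
      if hi : (i:ℕ) < k then
        if hj : (j:ℕ) < k then x ⟨i, hi⟩ ⟨j, hj⟩ else u ⟨i, hi⟩ ⟨j - k, by omega⟩
      else
        if hj : (j:ℕ) < k then 0 else y ⟨i - k, by omega⟩ ⟨j - k, by omega⟩ := by
  simp only [but, Matrix.reindex_apply, Matrix.submatrix_apply]
  rw [finSumFinEquiv_symm_eq, finSumFinEquiv_symm_eq]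
  split_ifs <;> simp [Matrix.fromBlocks]

def rowGlue (a b c : ℕ) (u1 : Matrix (Fin a) (Fin c) F) (u2 : Matrix (Fin b) (Fin c) F) :
    Matrix (Fin (a+b)) (Fin c) F :=
  Matrix.of fun i j => if h : (i:ℕ) < a then u1 ⟨i, h⟩ j else u2 ⟨(i:ℕ) - a, by omega⟩ j

def colGlue (a b c : ℕ) (v : Matrix (Fin a) (Fin b) F) (u1 : Matrix (Fin a) (Fin c) F) :
    Matrix (Fin a) (Fin (b+c)) F :=
  Matrix.of fun i j => if h : (j:ℕ) < b then v i ⟨j, h⟩ else u1 i ⟨(j:ℕ) - b, by omega⟩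

lemma but_but (a b c : ℕ) (x : gl F a) (y : gl F b) (z : gl F c)
    (v : Matrix (Fin a) (Fin b) F) (u1 : Matrix (Fin a) (Fin c) F)
    (u2 : Matrix (Fin b) (Fin c) F) :
    but (a+b) c (but a b x v y) (rowGlue a b c u1 u2) z =
      castM (Nat.add_assoc a b c).symm
        (but a (b+c) x (colGlue a b c v u1) (but b c y u2 z)) := by
  ext i j
  simp only [castM, Matrix.reindex_apply, Matrix.submatrix_apply, Equiv.symm_symm,
    finCongr_symm, finCongr_apply]
  simp only [but_apply, rowGlue, colGlue, Matrix.of_apply, Fin.coe_cast]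
  split_ifs <;>
    first
      | rfl
      | omega
      | (congr <;> omega)
      | (congr 1 <;> simp only [Fin.mk.injEq] <;> omega)



def rowEquiv (a b c : ℕ) :
    (Matrix (Fin a) (Fin c) F × Matrix (Fin b) (Fin c) F) ≃ Matrix (Fin (a+b)) (Fin c) F where
  toFun p := rowGlue a b c p.1 p.2
  invFun u := (Matrix.of fun i j => u ⟨(i:ℕ), by omega⟩ j,
               Matrix.of fun i j => u ⟨a + (i:ℕ), by omega⟩ j)
  left_inv p := by
    obtain ⟨u1, u2⟩ := p
    refine Prod.ext ?_ ?_ <;> ext i j <;>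
      simp only [Matrix.of_apply, rowGlue] <;> split_ifs with h <;>
      first
        | omega
        | (congr <;> first | rfl | (simp only [Fin.ext_iff]; omega) | omega)
  right_inv u := by
    ext i j
    simp only [Matrix.of_apply, rowGlue]
    split_ifs with h <;> (congr <;> first | rfl | (simp only [Fin.ext_iff]; omega) | omega)

def colEquiv (a b c : ℕ) :
    (Matrix (Fin a) (Fin b) F × Matrix (Fin a) (Fin c) F) ≃ Matrix (Fin a) (Fin (b+c)) F where
  toFun p := colGlue a b c p.1 p.2
  invFun u := (Matrix.of fun i j => u i ⟨(j:ℕ), by omega⟩,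
               Matrix.of fun i j => u i ⟨b + (j:ℕ), by omega⟩)
  left_inv p := by
    obtain ⟨v, u1⟩ := p
    refine Prod.ext ?_ ?_ <;> ext i j <;>
      simp only [Matrix.of_apply, colGlue] <;> split_ifs with h <;>
      first
        | omega
        | (congr <;> first | rfl | (simp only [Fin.ext_iff]; omega) | omega)
  right_inv u := by
    ext i j
    simp only [Matrix.of_apply, colGlue]
    split_ifs with h <;> (congr <;> first | rfl | (simp only [Fin.ext_iff]; omega) | omega)


/-- Harish-Chandra restriction is coassociative. -/
theorem HCres_coassoc (F : Type) [Field F] [Fintype F] [DecidableEq F]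
    (a b c : ℕ) (ha : 1 ≤ a) (hb : 1 ≤ b) (hc : 1 ≤ c)
    (f : gl F (a + b + c) → ℂ) (hf : Invariant (a + b + c) f)
    (x : gl F a) (y : gl F b) (z : gl F c) :
    ((Fintype.card F : ℂ) ^ (a * b))⁻¹ *
        ∑ v : Matrix (Fin a) (Fin b) F, HCres (a + b) c f (but a b x v y, z) =
      ((Fintype.card F : ℂ) ^ (b * c))⁻¹ *
        ∑ w : Matrix (Fin b) (Fin c) F,
          HCres a (b + c) (castFun (Nat.add_assoc a b c) f) (x, but b c y w z) := by
  set q : ℂ := (Fintype.card F : ℂ) with hq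
  have h1 : HCres (a + b) c f =
      fun p => (q ^ ((a+b)*c))⁻¹ * ∑ u, f (but (a+b) c p.1 u p.2) := by
    rw [HCres, dif_neg (by omega : ¬ a + b = 0), dif_neg (by omega : ¬ c = 0)]
  have h2 : HCres a (b + c) (castFun (Nat.add_assoc a b c) f) =
      fun p => (q ^ (a*(b+c)))⁻¹ *
        ∑ u, castFun (Nat.add_assoc a b c) f (but a (b+c) p.1 u p.2) := by
    rw [HCres, dif_neg (by omega : ¬ a = 0), dif_neg (by omega : ¬ b + c = 0)]
  rw [h1, h2]
  simp only [← Finset.mul_sum, ← mul_assoc, ← mul_inv, ← pow_add]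
  rw [show a * b + (a + b) * c = b * c + a * (b + c) by ring]
  congr 1
  -- reduce both sides to a triple sum
  have key : ∀ (v : Matrix (Fin a) (Fin b) F) (u1 : Matrix (Fin a) (Fin c) F)
      (u2 : Matrix (Fin b) (Fin c) F),
      f (but (a+b) c (but a b x v y) (rowGlue a b c u1 u2) z) =
        castFun (Nat.add_assoc a b c) f (but a (b+c) x (colGlue a b c v u1) (but b c y u2 z)) := by
    intro v u1 u2
    rw [but_but]
    rfl
  calc
    ∑ v : Matrix (Fin a) (Fin b) F,
        ∑ u : Matrix (Fin (a+b)) (Fin c) F, f (but (a+b) c (but a b x v y) u z)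
      = ∑ v : Matrix (Fin a) (Fin b) F,
          ∑ p : Matrix (Fin a) (Fin c) F × Matrix (Fin b) (Fin c) F,
            f (but (a+b) c (but a b x v y) (rowGlue a b c p.1 p.2) z) := by
        refine Finset.sum_congr rfl fun v _ => ?_
        exact (Fintype.sum_equiv (rowEquiv a b c) _ _ fun p => rfl).symm
    _ = ∑ v : Matrix (Fin a) (Fin b) F, ∑ u1 : Matrix (Fin a) (Fin c) F,
          ∑ u2 : Matrix (Fin b) (Fin c) F,
            f (but (a+b) c (but a b x v y) (rowGlue a b c u1 u2) z) := by
        simp only [Fintype.sum_prod_type]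
    _ = ∑ v : Matrix (Fin a) (Fin b) F, ∑ u2 : Matrix (Fin b) (Fin c) F,
          ∑ u1 : Matrix (Fin a) (Fin c) F,
            castFun (Nat.add_assoc a b c) f
              (but a (b+c) x (colGlue a b c v u1) (but b c y u2 z)) := by
        refine Finset.sum_congr rfl fun v _ => ?_
        exact Finset.sum_comm.trans (Finset.sum_congr rfl fun u2 _ =>
          Finset.sum_congr rfl fun u1 _ => key v u1 u2)
    _ = ∑ w : Matrix (Fin b) (Fin c) F, ∑ v : Matrix (Fin a) (Fin b) F,
          ∑ u1 : Matrix (Fin a) (Fin c) F,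
            castFun (Nat.add_assoc a b c) f
              (but a (b+c) x (colGlue a b c v u1) (but b c y w z)) := Finset.sum_comm
    _ = ∑ w : Matrix (Fin b) (Fin c) F,
          ∑ p : Matrix (Fin a) (Fin b) F × Matrix (Fin a) (Fin c) F,
            castFun (Nat.add_assoc a b c) f
              (but a (b+c) x (colGlue a b c p.1 p.2) (but b c y w z)) := by
        simp only [Fintype.sum_prod_type]
    _ = ∑ w : Matrix (Fin b) (Fin c) F,
          ∑ u : Matrix (Fin a) (Fin (b+c)) F,
            castFun (Nat.add_assoc a b c) f (but a (b+c) x u (but b c y w z)) := by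
        refine Finset.sum_congr rfl fun w _ => ?_
        exact Fintype.sum_equiv (colEquiv a b c) _ _ fun p => rfl


end HCPaper
end

section
/- Let 1_{gl_1} ∈ C_1 and 1_{gl_2} ∈ C_2 be the constant functions with value 1. Then: (a) (1_{gl_1}, 1_{gl_1})_1 = q/(q-1); (b) (1_{gl_2}, 1_{gl_2})_2 = q³/((q-1)²(q+1)); (c) setting u₁ = √((q-1)/q)·1_{gl_1} and u₂ = √((q-1)²(q+1)/q³)·1_{gl_2} (the corresponding unit vectors), one has (R^2_{1,1}(u₁ ⊠ u₁), u₂)_2 = √((q+1)/q); and (d) √((q+1)/q) is not a rational number. -/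
open Matrix BigOperators

namespace HCPaper

open scoped Classical

variable {F : Type} [Field F] [Fintype F] [DecidableEq F]

lemma isBUT_iff_s17 (m : gl F 2) : IsBUT 1 1 m ↔ m 1 0 = 0 := by
  unfold IsBUT blk Matrix.toBlocks₂₁
  rw [← Matrix.ext_iff]
  simp [Fin.forall_fin_one]
  constructor
  · intro h; convert h using 2 <;> decide
  · intro h; convert h using 2 <;> decide
noncomputable def e3 : {w : gl F 2 // w 1 0 = 0} ≃ F × F × F where
  toFun w := (w.1 0 0, w.1 0 1, w.1 1 1)
  invFun p := ⟨!![p.1, p.2.1; 0, p.2.2], by simp⟩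
  left_inv := by
    rintro ⟨w, hw⟩
    apply Subtype.ext
    ext i j; fin_cases i <;> fin_cases j <;> simp [hw]
  right_inv := by rintro ⟨a, b, d⟩; simp

lemma card_but : Fintype.card {w : gl F 2 // IsBUT 1 1 w} = Fintype.card F ^ 3 := by
  rw [Fintype.card_congr ((Equiv.subtypeEquivRight (fun w => isBUT_iff_s17 w)).trans e3)]
  simp [Fintype.card_prod]; ring

noncomputable def eGL : {g : Matrix.GeneralLinearGroup (Fin 2) F //
    IsBUT 1 1 (g : Matrix (Fin 2) (Fin 2) F)} ≃ Fˣ × Fˣ × F where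
  toFun g :=
    have hd : (g.1 : Matrix (Fin 2) (Fin 2) F).det ≠ 0 := by
      have : IsUnit (g.1 : Matrix (Fin 2) (Fin 2) F) := Units.isUnit g.1
      rw [Matrix.isUnit_iff_isUnit_det, isUnit_iff_ne_zero] at this
      exact this
    have h10 : (g.1 : Matrix (Fin 2) (Fin 2) F) 1 0 = 0 := (isBUT_iff_s17 _).1 g.2
    have hmul : (g.1 : Matrix (Fin 2) (Fin 2) F) 0 0 * (g.1 : Matrix (Fin 2) (Fin 2) F) 1 1 ≠ 0 := by
      rw [Matrix.det_fin_two, h10] at hd; simpa using hd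
    (Units.mk0 _ (left_ne_zero_of_mul hmul), Units.mk0 _ (right_ne_zero_of_mul hmul),
      (g.1 : Matrix (Fin 2) (Fin 2) F) 0 1)
  invFun p := ⟨Matrix.GeneralLinearGroup.mkOfDetNeZero !![(p.1 : F), p.2.2; 0, (p.2.1 : F)]
      (by rw [Matrix.det_fin_two]; simp),
    by rw [isBUT_iff_s17]; rfl⟩
  left_inv := by
    rintro ⟨g, hg⟩
    apply Subtype.ext; apply Units.ext
    show !![_,_;_,_] = _
    ext i j; fin_cases i <;> fin_cases j <;>
      simp [(isBUT_iff_s17 _).1 hg]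
  right_inv := by
    rintro ⟨a, d, b⟩
    refine Prod.ext (Units.ext ?_) (Prod.ext (Units.ext ?_) ?_)
    · show (!![(a:F), b; 0, (d:F)]) 0 0 = (a:F)
      simp
    · show (!![(a:F), b; 0, (d:F)]) 1 1 = (d:F)
      simp
    · show (!![(a:F), b; 0, (d:F)]) 0 1 = b
      simp

lemma pcard_eq : Pcard F 1 1 = Fintype.card F * (Fintype.card F - 1) ^ 2 := by
  rw [Pcard, Nat.card_congr eGL]
  simp [Nat.card_eq_fintype_card, Fintype.card_units]
  ring
def conjEquiv {n : ℕ} (g : Matrix.GeneralLinearGroup (Fin n) F) : gl F n ≃ gl F n where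
  toFun := conjM g
  invFun := conjM g⁻¹
  left_inv z := by
    unfold conjM
    rw [inv_inv, ← mul_assoc, Units.inv_mul_cancel_left, Units.inv_mul_cancel_right]
  right_inv z := by
    unfold conjM
    rw [inv_inv, ← mul_assoc, Units.mul_inv_cancel_left, Units.mul_inv_cancel_right]
lemma card_gl (n : ℕ) : Fintype.card (gl F n) = Fintype.card F ^ (n * n) := by
  rw [Fintype.card_congr (Matrix.of : (Fin n → Fin n → F) ≃ _).symm]
  simp [Fintype.card_fun, pow_mul]

lemma cardGL1 : Fintype.card (Matrix.GeneralLinearGroup (Fin 1) F) = Fintype.card F - 1 := by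
  rw [← Nat.card_eq_fintype_card, Matrix.card_GL_field]; simp

lemma cardGL2 : Fintype.card (Matrix.GeneralLinearGroup (Fin 2) F)
    = (Fintype.card F ^ 2 - 1) * (Fintype.card F ^ 2 - Fintype.card F) := by
  rw [← Nat.card_eq_fintype_card, Matrix.card_GL_field, Fin.prod_univ_two]; simp

lemma two_le_q : 2 ≤ Fintype.card F := Fintype.one_lt_card

lemma partA : inn 1 (fun _ : gl F 1 => (1 : ℂ)) (fun _ : gl F 1 => (1 : ℂ)) =
    (Fintype.card F : ℂ) / ((Fintype.card F : ℂ) - 1) := by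
  have hq := two_le_q (F := F)
  rw [inn]
  simp only [_root_.map_one, mul_one, Finset.sum_const, Finset.card_univ, nsmul_eq_mul, mul_one]
  rw [cardGL1, card_gl]
  rw [Nat.cast_sub (by omega)]
  push_cast
  rw [inv_mul_eq_div]
  norm_num

lemma partB : inn 2 (fun _ : gl F 2 => (1 : ℂ)) (fun _ : gl F 2 => (1 : ℂ)) =
    (Fintype.card F : ℂ) ^ 3 /
      (((Fintype.card F : ℂ) - 1) ^ 2 * ((Fintype.card F : ℂ) + 1)) := by
  have hq := two_le_q (F := F)
  have h1 : ((Fintype.card F : ℂ)) ≠ 0 := Nat.cast_ne_zero.2 (by omega)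
  have h2 : ((Fintype.card F : ℂ)) - 1 ≠ 0 := by
    rw [sub_ne_zero]
    intro h
    have : (Fintype.card F : ℕ) = 1 := by exact_mod_cast h
    omega
  have h3 : ((Fintype.card F : ℂ)) + 1 ≠ 0 := by
    have : ((Fintype.card F + 1 : ℕ) : ℂ) ≠ 0 := Nat.cast_ne_zero.2 (by omega)
    push_cast at this; exact this
  rw [inn]
  simp only [_root_.map_one, mul_one, Finset.sum_const, Finset.card_univ, nsmul_eq_mul, mul_one]
  rw [cardGL2, card_gl]
  rw [Nat.cast_mul, Nat.cast_sub (by nlinarith), Nat.cast_sub (by nlinarith)]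
  push_cast
  rw [inv_mul_eq_div]
  have hD1 : ((Fintype.card F : ℂ) ^ 2 - 1) * ((Fintype.card F : ℂ) ^ 2 - (Fintype.card F : ℂ)) ≠ 0 := by
    have : ((Fintype.card F : ℂ) ^ 2 - 1) * ((Fintype.card F : ℂ) ^ 2 - (Fintype.card F : ℂ))
        = ((Fintype.card F : ℂ) - 1) * ((Fintype.card F : ℂ) + 1) * ((Fintype.card F : ℂ) * ((Fintype.card F : ℂ) - 1)) := by ring
    rw [this]
    exact mul_ne_zero (mul_ne_zero h2 h3) (mul_ne_zero h1 h2)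
  have hD2 : ((Fintype.card F : ℂ) - 1) ^ 2 * ((Fintype.card F : ℂ) + 1) ≠ 0 :=
    mul_ne_zero (pow_ne_zero _ h2) h3
  rw [div_eq_div_iff hD1 hD2]
  ring
lemma sum_ite_but (X : ℂ) :
    ∑ w : gl F 2, (if IsBUT 1 1 w then X else 0) = ((Fintype.card F ^ 3 : ℕ) : ℂ) * X := by
  classical
  rw [← Finset.sum_filter, Finset.sum_const, nsmul_eq_mul]
  congr 1
  rw [← card_but (F := F), Fintype.card_subtype]

lemma keyReal (q : ℕ) (hq : 2 ≤ q) :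
    (((q * (q - 1) ^ 2 : ℕ)) : ℝ)⁻¹ *
        Real.sqrt ((((q : ℝ) - 1) ^ 2 * ((q : ℝ) + 1)) / (q : ℝ) ^ 3) *
        (((q ^ 3 : ℕ)) : ℝ) *
        (Real.sqrt (((q : ℝ) - 1) / (q : ℝ)) * Real.sqrt (((q : ℝ) - 1) / (q : ℝ)))
      = Real.sqrt (((q : ℝ) + 1) / (q : ℝ)) := by
  have hx0 : (0 : ℝ) < (q : ℝ) := by exact_mod_cast (by omega : 0 < q)
  have hx1 : (1 : ℝ) ≤ (q : ℝ) := by exact_mod_cast (by omega : 1 ≤ q)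
  have hcast : (((q * (q - 1) ^ 2 : ℕ)) : ℝ) = (q : ℝ) * ((q : ℝ) - 1) ^ 2 := by
    push_cast [Nat.cast_sub (by omega : 1 ≤ q)]; ring
  have hms : Real.sqrt (((q : ℝ) - 1) / (q : ℝ)) * Real.sqrt (((q : ℝ) - 1) / (q : ℝ))
      = ((q : ℝ) - 1) / (q : ℝ) :=
    Real.mul_self_sqrt (div_nonneg (by linarith) hx0.le)
  have hsplit : (((q : ℝ) - 1) / (q : ℝ)) ^ 2 * (((q : ℝ) + 1) / (q : ℝ))
      = (((q : ℝ) - 1) ^ 2 * ((q : ℝ) + 1)) / (q : ℝ) ^ 3 := by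
    rw [div_pow, div_mul_div_comm, ← pow_succ]
  have hd : Real.sqrt ((((q : ℝ) - 1) ^ 2 * ((q : ℝ) + 1)) / (q : ℝ) ^ 3)
      = (((q : ℝ) - 1) / (q : ℝ)) * Real.sqrt (((q : ℝ) + 1) / (q : ℝ)) := by
    rw [← hsplit, Real.sqrt_mul (sq_nonneg _),
      Real.sqrt_sq (div_nonneg (by linarith) hx0.le)]
  have hx2 : (2 : ℝ) ≤ (q : ℝ) := by exact_mod_cast hq
  have hne : (q : ℝ) - 1 ≠ 0 := by linarith
  rw [hcast, hms, hd]
  push_cast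
  field_simp

lemma cancel_aux (a X Y : ℂ) (ha : a ≠ 0) : a⁻¹ * (X * (a * Y)) = X * Y := by
  field_simp

set_option maxHeartbeats 1000000 in
set_option maxHeartbeats 1000000 in
lemma partC :
    inn 2
        (HCind 1 1 fun _ : gl F 1 × gl F 1 =>
          ((Real.sqrt (((Fintype.card F : ℝ) - 1) / (Fintype.card F : ℝ)) : ℝ) : ℂ) *
          ((Real.sqrt (((Fintype.card F : ℝ) - 1) / (Fintype.card F : ℝ)) : ℝ) : ℂ))
        (fun _ : gl F 2 =>
          ((Real.sqrt ((((Fintype.card F : ℝ) - 1) ^ 2 * ((Fintype.card F : ℝ) + 1)) /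
              (Fintype.card F : ℝ) ^ 3) : ℝ) : ℂ)) =
      ((Real.sqrt (((Fintype.card F : ℝ) + 1) / (Fintype.card F : ℝ)) : ℝ) : ℂ) := by
  have hq := two_le_q (F := F)
  set c : ℝ := Real.sqrt (((Fintype.card F : ℝ) - 1) / (Fintype.card F : ℝ)) with hc
  set d : ℝ := Real.sqrt ((((Fintype.card F : ℝ) - 1) ^ 2 * ((Fintype.card F : ℝ) + 1)) /
      (Fintype.card F : ℝ) ^ 3) with hd
  set s : ℝ := Real.sqrt (((Fintype.card F : ℝ) + 1) / (Fintype.card F : ℝ)) with hs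
  have hH : HCind 1 1 (fun _ : gl F 1 × gl F 1 => (c : ℂ) * (c : ℂ)) = fun z =>
      ((Pcard F 1 1 : ℂ))⁻¹ *
        ∑ g : Matrix.GeneralLinearGroup (Fin 2) F,
          if IsBUT 1 1 (conjM g z) then (c : ℂ) * (c : ℂ) else 0 := by
    rw [HCind, dif_neg one_ne_zero, dif_neg one_ne_zero]
  rw [inn, hH]
  simp only [Complex.conj_ofReal]
  have hswap : ∑ x : gl F 2, (((Pcard F 1 1 : ℂ))⁻¹ *
        ∑ g : Matrix.GeneralLinearGroup (Fin 2) F,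
          (if IsBUT 1 1 (conjM g x) then (c : ℂ) * (c : ℂ) else 0)) * (d : ℂ)
      = ((Pcard F 1 1 : ℂ))⁻¹ * (d : ℂ) *
          ∑ g : Matrix.GeneralLinearGroup (Fin 2) F, ∑ x : gl F 2,
            (if IsBUT 1 1 (conjM g x) then (c : ℂ) * (c : ℂ) else 0) := by
    calc ∑ x : gl F 2, (((Pcard F 1 1 : ℂ))⁻¹ *
          ∑ g : Matrix.GeneralLinearGroup (Fin 2) F,
            (if IsBUT 1 1 (conjM g x) then (c : ℂ) * (c : ℂ) else 0)) * (d : ℂ)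
        = ∑ x : gl F 2, ∑ g : Matrix.GeneralLinearGroup (Fin 2) F,
            ((Pcard F 1 1 : ℂ))⁻¹ * (d : ℂ) *
              (if IsBUT 1 1 (conjM g x) then (c : ℂ) * (c : ℂ) else 0) := by
          refine Finset.sum_congr rfl fun x _ => ?_
          rw [Finset.mul_sum, Finset.sum_mul]
          exact Finset.sum_congr rfl fun g _ => by ring
      _ = ∑ g : Matrix.GeneralLinearGroup (Fin 2) F, ∑ x : gl F 2,
            ((Pcard F 1 1 : ℂ))⁻¹ * (d : ℂ) *
              (if IsBUT 1 1 (conjM g x) then (c : ℂ) * (c : ℂ) else 0) := Finset.sum_comm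
      _ = ((Pcard F 1 1 : ℂ))⁻¹ * (d : ℂ) *
            ∑ g : Matrix.GeneralLinearGroup (Fin 2) F, ∑ x : gl F 2,
              (if IsBUT 1 1 (conjM g x) then (c : ℂ) * (c : ℂ) else 0) := by
          simp only [← Finset.mul_sum]
  rw [hswap]
  have hinner : ∀ g : Matrix.GeneralLinearGroup (Fin 2) F,
      ∑ x : gl F 2, (if IsBUT 1 1 (conjM g x) then (c : ℂ) * (c : ℂ) else 0)
        = ((Fintype.card F ^ 3 : ℕ) : ℂ) * ((c : ℂ) * (c : ℂ)) := fun g =>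
    (Fintype.sum_equiv (conjEquiv g)
      (fun x => if IsBUT 1 1 (conjM g x) then (c : ℂ) * (c : ℂ) else 0)
      (fun w => if IsBUT 1 1 w then (c : ℂ) * (c : ℂ) else 0)
      (fun x => rfl)).trans (sum_ite_but _)
  rw [Finset.sum_congr rfl (fun g _ => hinner g), Finset.sum_const, Finset.card_univ,
    nsmul_eq_mul]
  have hGL : ((Fintype.card (Matrix.GeneralLinearGroup (Fin 2) F) : ℂ)) ≠ 0 :=
    Nat.cast_ne_zero.2 Fintype.card_ne_zero
  rw [cancel_aux _ _ _ hGL, pcard_eq]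
  have key := keyReal (Fintype.card F) hq
  rw [← hc, ← hd, ← hs] at key
  calc (((Fintype.card F * (Fintype.card F - 1) ^ 2 : ℕ)) : ℂ)⁻¹ * (d : ℂ) *
        (((Fintype.card F ^ 3 : ℕ) : ℂ) * ((c : ℂ) * (c : ℂ)))
      = ((((Fintype.card F * (Fintype.card F - 1) ^ 2 : ℕ) : ℝ))⁻¹ * d *
          ((Fintype.card F ^ 3 : ℕ) : ℝ) * (c * c) : ℝ) := by
        push_cast
        ring
    _ = ((s : ℝ) : ℂ) := by rw [key]
lemma partD (q : ℕ) (hq : 2 ≤ q) :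
    Irrational (Real.sqrt (((q : ℝ) + 1) / (q : ℝ))) := by
  have hx0 : (0 : ℝ) < (q : ℝ) := by exact_mod_cast (by omega : 0 < q)
  have h1 : ((q : ℝ) + 1) / (q : ℝ) = ((q * (q + 1) : ℕ) : ℝ) / ((q : ℝ)) ^ 2 := by
    push_cast
    field_simp
  have h2 : Real.sqrt (((q : ℝ) + 1) / (q : ℝ))
      = Real.sqrt ((q * (q + 1) : ℕ)) / (q : ℝ) := by
    rw [h1, Real.sqrt_div (Nat.cast_nonneg _), Real.sqrt_sq hx0.le]
  rw [h2]
  have hns : ¬ IsSquare (q * (q + 1)) := by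
    rintro ⟨r, hr⟩
    have h3 : q < r := by nlinarith
    have h4 : r < q + 1 := by nlinarith
    omega
  exact Irrational.div_natCast (irrational_sqrt_natCast_iff.2 hns) (by omega)

/-- the computations exhibiting non-descent of the real PSH algebra:
norms of the constant functions `1` on `gl_1` and `gl_2`, the inner product
`(R^2_{1,1}(u₁ ⊠ u₁), u₂)_2 = √((q+1)/q)`, and its irrationality. -/
theorem nondescending_computations (F : Type) [Field F] [Fintype F] [DecidableEq F] :
    inn 1 (fun _ : gl F 1 => (1 : ℂ)) (fun _ : gl F 1 => (1 : ℂ)) =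
        (Fintype.card F : ℂ) / ((Fintype.card F : ℂ) - 1) ∧
    inn 2 (fun _ : gl F 2 => (1 : ℂ)) (fun _ : gl F 2 => (1 : ℂ)) =
        (Fintype.card F : ℂ) ^ 3 /
          (((Fintype.card F : ℂ) - 1) ^ 2 * ((Fintype.card F : ℂ) + 1)) ∧
    inn 2
        (HCind 1 1 fun _ : gl F 1 × gl F 1 =>
          ((Real.sqrt (((Fintype.card F : ℝ) - 1) / (Fintype.card F : ℝ)) : ℝ) : ℂ) *
          ((Real.sqrt (((Fintype.card F : ℝ) - 1) / (Fintype.card F : ℝ)) : ℝ) : ℂ))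
        (fun _ : gl F 2 =>
          ((Real.sqrt ((((Fintype.card F : ℝ) - 1) ^ 2 * ((Fintype.card F : ℝ) + 1)) /
              (Fintype.card F : ℝ) ^ 3) : ℝ) : ℂ)) =
      ((Real.sqrt (((Fintype.card F : ℝ) + 1) / (Fintype.card F : ℝ)) : ℝ) : ℂ) ∧
    Irrational (Real.sqrt (((Fintype.card F : ℝ) + 1) / (Fintype.card F : ℝ))) := by
  exact ⟨partA, partB, partC, partD (Fintype.card F) Fintype.one_lt_card⟩

end HCPaper
end
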